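/- arXiv:1310.2525 — 6 statements merged into one kernel-verified Lean document; each statement's English description precedes it below -/
import Mathlib

section
/- Let A be a real d×d matrix that is normal (A·Aᵀ = Aᵀ·A) and let γ > 0 be such that every eigenvalue μ of the complexification of A satisfies Re(μ) ≤ −γ. Then for every t ≥ 0, the operator norm of exp(tA) satisfies ‖exp(tA)‖ ≤ e^{−γt}. -/
open MeasureTheory ProbabilityTheory Matrix Filter Set
open scoped RealInnerProductSpace

noncomputable section

/-- A real square matrix is Hurwitz if every eigenvalue of its complexification
has strictly negative real part. -/
def IsHurwitz {n : Type*} [Fintype n] [DecidableEq n] (A : Matrix n n ℝ) : Prop :=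
  ∀ μ ∈ spectrum ℂ (A.map (Complex.ofReal : ℝ → ℂ)), μ.re < 0

/-- The operator norm of a real matrix induced by the Euclidean norm on `ℝ^d`. -/
def eopNorm {d : ℕ} (A : Matrix (Fin d) (Fin d) ℝ) : ℝ :=
  ‖Matrix.toEuclideanCLM (𝕜 := ℝ) A‖

/-- A matrix acting on Euclidean space. -/
def applyM {d : ℕ} (A : Matrix (Fin d) (Fin d) ℝ) (x : EuclideanSpace ℝ (Fin d)) :
    EuclideanSpace ℝ (Fin d) :=
  Matrix.toEuclideanCLM (𝕜 := ℝ) A x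

section aux

set_option maxHeartbeats 1000000
set_option synthInstance.maxHeartbeats 400000

variable {d : ℕ}

local notation "E" => EuclideanSpace ℂ (Fin d)

private lemma aux_real_smul (r : ℝ) (z : E) : r • z = (r : ℂ) • z := by
  rw [← algebraMap_smul (R := ℝ) ℂ r z, Complex.coe_algebraMap]

private lemma aux_real_smul_op (r : ℝ) (m : E →L[ℂ] E) : r • m = (r : ℂ) • m := by
  rw [← algebraMap_smul (R := ℝ) ℂ r m, Complex.coe_algebraMap]

private lemma aux_eig_mem_spectrum (b : E →L[ℂ] E) (μ : ℂ) (y : E) (hy : y ≠ 0)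
    (hby : b y = μ • y) : μ ∈ spectrum ℂ b := by
  rw [spectrum.mem_iff]
  intro hu
  have h1 : (algebraMap ℂ (E →L[ℂ] E) μ - b) y = 0 := by
    simp [Algebra.algebraMap_eq_smul_one, hby, ContinuousLinearMap.sub_apply,
      ContinuousLinearMap.smul_apply]
  have h2 := congrArg (fun z => (↑hu.unit⁻¹ : E →L[ℂ] E) z) h1
  simp only [map_zero] at h2
  rw [← ContinuousLinearMap.comp_apply, ← ContinuousLinearMap.mul_def,
    IsUnit.val_inv_mul] at h2
  exact hy (by simpa using h2)

private lemma aux_exists_ker (u : E →L[ℂ] E) (hu : ¬ IsUnit u) :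
    ∃ y : E, y ≠ 0 ∧ u y = 0 := by
  by_contra h
  push_neg at h
  have hinj : Function.Injective (u : E →ₗ[ℂ] E) := by
    rw [← LinearMap.ker_eq_bot, LinearMap.ker_eq_bot']
    intro m hm
    by_contra hm0
    exact (h m hm0) hm
  have hbij : Function.Bijective (u : E →ₗ[ℂ] E) :=
    ⟨hinj, (LinearMap.injective_iff_surjective).mp hinj⟩
  let e := (LinearEquiv.ofBijective (u : E →ₗ[ℂ] E) hbij).toContinuousLinearEquiv
  apply hu
  have he : (e : E →L[ℂ] E) = u := by ext x; rfl
  exact ⟨⟨(e : E →L[ℂ] E), (e.symm : E →L[ℂ] E),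
    by ext x; simp [ContinuousLinearMap.mul_def], by ext x; simp [ContinuousLinearMap.mul_def]⟩, he⟩

/-- Key spectral bound: if `b` is normal and its spectrum has real part at most `-γ`, then the
spectrum of `t • (b* + b)` is bounded above by `-2γt`. -/
private lemma aux_spec_bound (b : E →L[ℂ] E) (hb : b * star b = star b * b) {γ t : ℝ}
    (ht : 0 < t) (hs : ∀ μ ∈ spectrum ℂ b, μ.re ≤ -γ) :
    ∀ x ∈ spectrum ℝ (t • (star b + b)), x ≤ -(2 * γ * t) := by
  intro x hx
  have hop := aux_real_smul_op (d := d)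
  set h : E →L[ℂ] E := t • (star b + b) with hh
  set u : E →L[ℂ] E := algebraMap ℝ _ x - h with hu_def
  have hu : ¬ IsUnit u := spectrum.mem_iff.mp hx
  obtain ⟨v, hv0, hv⟩ := aux_exists_ker u hu
  have hcomm : b * h = h * b := by
    rw [hh, hop, mul_smul_comm, smul_mul_assoc]
    congr 1
    rw [mul_add, add_mul, hb]
  have hub : u * b = b * u := by
    rw [hu_def, sub_mul, mul_sub, hcomm, Algebra.commutes]
  have hinv : ∀ z ∈ LinearMap.ker (u : E →ₗ[ℂ] E), (b : E →ₗ[ℂ] E) z ∈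
      LinearMap.ker (u : E →ₗ[ℂ] E) := by
    intro z hz
    simp only [LinearMap.mem_ker, ContinuousLinearMap.coe_coe] at hz ⊢
    have : (u * b) z = 0 := by rw [hub]; simp [ContinuousLinearMap.mul_apply, hz]
    simpa [ContinuousLinearMap.mul_apply] using this
  set V := LinearMap.ker (u : E →ₗ[ℂ] E) with hV
  haveI : Nontrivial V := by
    refine ⟨⟨⟨v, by exact hv⟩, 0, ?_⟩⟩
    simp [Subtype.ext_iff, hv0]
  set bV : Module.End ℂ V := (b : E →ₗ[ℂ] E).restrict hinv with hbV
  obtain ⟨μ, hμ⟩ := Module.End.exists_eigenvalue bV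
  obtain ⟨w, hw⟩ := hμ.exists_hasEigenvector
  set y : E := (w : E) with hy_def
  have hy0 : y ≠ 0 := by
    simpa [hy_def, Submodule.coe_eq_zero] using hw.right
  have hby : b y = μ • y := by
    have := hw.apply_eq_smul
    have h2 := congrArg (Subtype.val) this
    simpa [hbV, LinearMap.restrict_apply, hy_def] using h2
  have hmem : u y = 0 := w.2
  have hhy : h y = (x : ℂ) • y := by
    have : (algebraMap ℝ (E →L[ℂ] E) x) y = h y := by
      have := sub_eq_zero.mp (by simpa [hu_def, ContinuousLinearMap.sub_apply] using hmem)
      simpa using this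
    rw [← this, Algebra.algebraMap_eq_smul_one]
    simp [ContinuousLinearMap.smul_apply]
  have hre : μ.re ≤ -γ := hs μ (aux_eig_mem_spectrum b μ y hy0 hby)
  have htC : (t : ℂ) ≠ 0 := by exact_mod_cast ht.ne'
  have hsby : star b y = (((x / t : ℝ) : ℂ) - μ) • y := by
    have h2 : (t : ℂ) • ((star b) y + b y) = (x : ℂ) • y := by
      rw [← aux_real_smul t _]
      simpa [hh, ContinuousLinearMap.smul_apply, ContinuousLinearMap.add_apply] using hhy
    have h1 : (star b) y + b y = ((x / t : ℝ) : ℂ) • y := by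
      have h3 := congrArg (fun z => ((t : ℂ))⁻¹ • z) h2
      simp only [smul_smul, inv_mul_cancel₀ htC, one_smul] at h3
      rw [h3]
      push_cast
      rw [div_eq_inv_mul]
    rw [sub_smul, ← h1, hby]
    abel
  have hadj : (inner ℂ (star b y) y : ℂ) = inner ℂ y (b y) := by
    rw [ContinuousLinearMap.star_eq_adjoint, ContinuousLinearMap.adjoint_inner_left]
  rw [hsby, hby, inner_smul_left, inner_smul_right] at hadj
  have hyy : (inner ℂ y y : ℂ) ≠ 0 := inner_self_ne_zero.mpr hy0
  have hkey : (starRingEnd ℂ) (((x / t : ℝ) : ℂ) - μ) = μ :=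
    mul_right_cancel₀ hyy hadj
  have hre2 : x / t - μ.re = μ.re := by
    have := congrArg Complex.re hkey
    simpa [Complex.sub_re, Complex.conj_re] using this
  have : x / t ≤ -(2 * γ) := by nlinarith
  calc x = (x / t) * t := by field_simp
  _ ≤ -(2 * γ) * t := by nlinarith
  _ = -(2 * γ * t) := by ring

/-- Real operator norm is bounded by the complexified operator norm. -/
private lemma aux_norm_le_complex (M : Matrix (Fin d) (Fin d) ℝ) :
    ‖toEuclideanCLM (𝕜 := ℝ) M‖ ≤
      ‖toEuclideanCLM (𝕜 := ℂ) (M.map (Complex.ofReal : ℝ → ℂ))‖ := by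
  refine ContinuousLinearMap.opNorm_le_bound _ (norm_nonneg _) fun x => ?_
  set z : EuclideanSpace ℂ (Fin d) :=
    (WithLp.equiv 2 (Fin d → ℂ)).symm (fun i => ((WithLp.equiv 2 (Fin d → ℝ)) x i : ℂ)) with hz
  have hnorm_z : ‖z‖ = ‖x‖ := by
    rw [EuclideanSpace.norm_eq, EuclideanSpace.norm_eq]
    congr 1
    refine Finset.sum_congr rfl fun i _ => ?_
    simp [hz]
  have happ : toEuclideanCLM (𝕜 := ℂ) (M.map (Complex.ofReal : ℝ → ℂ)) z =
      (WithLp.equiv 2 (Fin d → ℂ)).symm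
        (fun i => (((WithLp.equiv 2 (Fin d → ℝ)) (toEuclideanCLM (𝕜 := ℝ) M x)) i : ℂ)) := by
    rw [hz, WithLp.equiv_symm_apply, toEuclideanCLM_toLp]
    congr 1
    funext i
    simp [Matrix.mulVec, dotProduct]
  have hnorm_app : ‖toEuclideanCLM (𝕜 := ℂ) (M.map (Complex.ofReal : ℝ → ℂ)) z‖
      = ‖toEuclideanCLM (𝕜 := ℝ) M x‖ := by
    rw [happ, EuclideanSpace.norm_eq, EuclideanSpace.norm_eq]
    congr 1
    refine Finset.sum_congr rfl fun i _ => ?_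
    simp
  calc ‖toEuclideanCLM (𝕜 := ℝ) M x‖
      = ‖toEuclideanCLM (𝕜 := ℂ) (M.map (Complex.ofReal : ℝ → ℂ)) z‖ := hnorm_app.symm
    _ ≤ ‖toEuclideanCLM (𝕜 := ℂ) (M.map (Complex.ofReal : ℝ → ℂ))‖ * ‖z‖ :=
        ContinuousLinearMap.le_opNorm _ _
    _ = _ := by rw [hnorm_z]

/-- `exp` commutes with entrywise complexification. -/
private lemma aux_map_exp_complex (M : Matrix (Fin d) (Fin d) ℝ) :
    (NormedSpace.exp M).map (Complex.ofReal : ℝ → ℂ)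
      = NormedSpace.exp (M.map (Complex.ofReal : ℝ → ℂ)) := by
  letI : SeminormedRing (Matrix (Fin d) (Fin d) ℝ) := Matrix.linftyOpSemiNormedRing
  letI : NormedRing (Matrix (Fin d) (Fin d) ℝ) := Matrix.linftyOpNormedRing
  letI : NormedAlgebra ℝ (Matrix (Fin d) (Fin d) ℝ) := Matrix.linftyOpNormedAlgebra
  letI : SeminormedRing (Matrix (Fin d) (Fin d) ℂ) := Matrix.linftyOpSemiNormedRing
  letI : NormedRing (Matrix (Fin d) (Fin d) ℂ) := Matrix.linftyOpNormedRing
  letI : NormedAlgebra ℝ (Matrix (Fin d) (Fin d) ℂ) := Matrix.linftyOpNormedAlgebra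
  letI : NormedAlgebra ℂ (Matrix (Fin d) (Fin d) ℂ) := Matrix.linftyOpNormedAlgebra
  letI : NormedAlgebra ℚ (Matrix (Fin d) (Fin d) ℝ) := NormedAlgebra.restrictScalars ℚ ℝ _
  letI : NormedAlgebra ℚ (Matrix (Fin d) (Fin d) ℂ) := NormedAlgebra.restrictScalars ℚ ℂ _
  have hcont : Continuous
      (Complex.ofRealHom.mapMatrix : Matrix (Fin d) (Fin d) ℝ →+* Matrix (Fin d) (Fin d) ℂ) := by
    apply continuous_matrix
    intro i j
    exact Complex.continuous_ofReal.comp (continuous_apply_apply i j)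
  have h1 := NormedSpace.map_exp
    (Complex.ofRealHom.mapMatrix : Matrix (Fin d) (Fin d) ℝ →+* Matrix (Fin d) (Fin d) ℂ) hcont M
  have h2 : NormedSpace.exp (M.map (Complex.ofReal : ℝ → ℂ))
      = NormedSpace.exp (M.map (Complex.ofReal : ℝ → ℂ)) := by
    rfl
  rw [← h2]
  exact h1

/-- `toEuclideanCLM` commutes with `exp`. -/
private lemma aux_clm_exp (N : Matrix (Fin d) (Fin d) ℂ) :
    toEuclideanCLM (𝕜 := ℂ) (NormedSpace.exp N)
      = NormedSpace.exp (toEuclideanCLM (𝕜 := ℂ) N) := by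
  letI : SeminormedRing (Matrix (Fin d) (Fin d) ℂ) := Matrix.linftyOpSemiNormedRing
  letI : NormedRing (Matrix (Fin d) (Fin d) ℂ) := Matrix.linftyOpNormedRing
  letI : NormedAlgebra ℂ (Matrix (Fin d) (Fin d) ℂ) := Matrix.linftyOpNormedAlgebra
  letI : NormedAlgebra ℚ (Matrix (Fin d) (Fin d) ℂ) := NormedAlgebra.restrictScalars ℚ ℂ _
  letI : NormedAlgebra ℚ (EuclideanSpace ℂ (Fin d) →L[ℂ] EuclideanSpace ℂ (Fin d)) :=
    NormedAlgebra.restrictScalars ℚ ℂ _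
  let L : Matrix (Fin d) (Fin d) ℂ →ₗ[ℂ]
      (EuclideanSpace ℂ (Fin d) →L[ℂ] EuclideanSpace ℂ (Fin d)) :=
    { toFun := fun N => toEuclideanCLM (𝕜 := ℂ) N
      map_add' := fun a b => map_add _ a b
      map_smul' := fun c a => map_smul _ c a }
  let R : Matrix (Fin d) (Fin d) ℂ →+*
      (EuclideanSpace ℂ (Fin d) →L[ℂ] EuclideanSpace ℂ (Fin d)) :=
    { toFun := fun N => toEuclideanCLM (𝕜 := ℂ) N
      map_one' := map_one _
      map_mul' := fun a b => map_mul _ a b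
      map_zero' := map_zero _
      map_add' := fun a b => map_add _ a b }
  have hcont : Continuous R := LinearMap.continuous_of_finiteDimensional L
  have h1 := NormedSpace.map_exp (𝔸 := Matrix (Fin d) (Fin d) ℂ)
    (𝔹 := EuclideanSpace ℂ (Fin d) →L[ℂ] EuclideanSpace ℂ (Fin d)) R hcont N
  exact h1

end aux

set_option maxHeartbeats 1600000
set_option synthInstance.maxHeartbeats 1000000

/-- If `A` is normal and all eigenvalues of its complexification have real part at most `-γ`,
then `‖exp(t A)‖ ≤ e^{-γ t}` for all `t ≥ 0`. -/
theorem normal_exp_bound {d : ℕ} (A : Matrix (Fin d) (Fin d) ℝ)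
    (hnormal : A * Aᵀ = Aᵀ * A) (γ : ℝ) (hγ : 0 < γ)
    (hspec : ∀ μ ∈ spectrum ℂ (A.map (Complex.ofReal : ℝ → ℂ)), μ.re ≤ -γ) :
    ∀ t : ℝ, 0 ≤ t → eopNorm (NormedSpace.exp (t • A)) ≤ Real.exp (-γ * t) := by
  intro t ht
  rcases ht.eq_or_lt with h0 | ht
  · -- t = 0
    letI : SeminormedRing (Matrix (Fin d) (Fin d) ℝ) := Matrix.linftyOpSemiNormedRing
    letI : NormedRing (Matrix (Fin d) (Fin d) ℝ) := Matrix.linftyOpNormedRing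
    letI : NormedAlgebra ℝ (Matrix (Fin d) (Fin d) ℝ) := Matrix.linftyOpNormedAlgebra
    rw [← h0, zero_smul, NormedSpace.exp_zero, eopNorm, _root_.map_one, neg_mul, mul_zero, neg_zero,
      Real.exp_zero]
    exact ContinuousLinearMap.norm_id_le
  · set B := A.map (Complex.ofReal : ℝ → ℂ) with hB
    set b := toEuclideanCLM (𝕜 := ℂ) B with hb_def
    have hspecb : ∀ μ ∈ spectrum ℂ b, μ.re ≤ -γ := by
      intro μ hμ
      apply hspec
      rwa [hb_def, AlgEquiv.spectrum_eq (toEuclideanCLM (𝕜 := ℂ) (n := Fin d)) B] at hμ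
    have hBH : Bᴴ = (Aᵀ).map (Complex.ofReal : ℝ → ℂ) := by
      ext i j
      simp [hB, conjTranspose_apply, Matrix.map_apply, Complex.conj_ofReal]
    have hstarb : star b = toEuclideanCLM (𝕜 := ℂ) Bᴴ := (map_star _ _).symm
    have hmapmul : ∀ M N : Matrix (Fin d) (Fin d) ℝ,
        (M.map (Complex.ofReal : ℝ → ℂ)) * (N.map (Complex.ofReal : ℝ → ℂ))
          = (M * N).map (Complex.ofReal : ℝ → ℂ) := by
      intro M N
      ext i j
      simp [Matrix.mul_apply, Matrix.map_apply]
    have hnb : b * star b = star b * b := by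
      rw [hstarb, hb_def, ← _root_.map_mul, ← _root_.map_mul]
      congr 1
      rw [hBH, hB, hmapmul, hmapmul, hnormal]
    have key := aux_spec_bound b hnb ht hspecb
    rw [eopNorm]
    refine le_trans (aux_norm_le_complex _) ?_
    have hmap_smul : ((t • A).map (Complex.ofReal : ℝ → ℂ)) = (t : ℂ) • B := by
      ext i j
      simp [Matrix.map_apply, Matrix.smul_apply, hB]
    rw [aux_map_exp_complex, hmap_smul, aux_clm_exp, _root_.map_smul]
    -- now bound ‖exp ℂ ((t:ℂ) • b)‖
    letI : NormedAlgebra ℚ (EuclideanSpace ℂ (Fin d) →L[ℂ] EuclideanSpace ℂ (Fin d)) :=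
      NormedAlgebra.restrictScalars ℚ ℂ _
    set c := NormedSpace.exp ((t : ℂ) • b) with hc
    have h1 : ‖c‖ * ‖c‖ = ‖star c * c‖ := (CStarRing.norm_star_mul_self).symm
    have hcomm : Commute ((t : ℂ) • star b) ((t : ℂ) • b) :=
      Commute.smul_left (Commute.smul_right hnb.symm _) _
    have h2 : star c * c = NormedSpace.exp ((t : ℂ) • star b + (t : ℂ) • b) := by
      have hst : star ((t : ℂ) • b) = (t : ℂ) • star b := by
        rw [star_smul]
        simp [Complex.conj_ofReal]
      rw [hc, NormedSpace.star_exp, hst, ← NormedSpace.exp_add_of_commute hcomm]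
    have h3 : (t : ℂ) • star b + (t : ℂ) • b = t • (star b + b) := by
      rw [aux_real_smul_op, smul_add]
    have hsa : _root_.IsSelfAdjoint (t • (star b + b) :
        EuclideanSpace ℂ (Fin d) →L[ℂ] EuclideanSpace ℂ (Fin d)) := by
      rw [isSelfAdjoint_iff, aux_real_smul_op, star_smul, (IsSelfAdjoint.star_add_self b).star_eq]
      simp [Complex.conj_ofReal]
    have h4 : star c * c = NormedSpace.exp (t • (star b + b)) := by
      rw [h2, h3]
    have h5 : ‖star c * c‖ ≤ Real.exp (-(2 * γ * t)) := by
      rw [h4, ← CFC.real_exp_eq_normedSpace_exp hsa]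
      refine norm_cfc_le (Real.exp_nonneg _) fun x hx => ?_
      rw [Real.norm_eq_abs, abs_of_pos (Real.exp_pos _)]
      exact Real.exp_le_exp.mpr (key x hx)
    have h6 : Real.exp (-(2 * γ * t)) = Real.exp (-γ * t) * Real.exp (-γ * t) := by
      rw [← Real.exp_add]
      ring_nf
    have h7 : ‖c‖ * ‖c‖ ≤ Real.exp (-γ * t) * Real.exp (-γ * t) := by
      rw [h1, ← h6]
      exact h5
    nlinarith [norm_nonneg c, Real.exp_pos (-γ * t)]
end
end

section
/- Let E be a finite set and let {A_i}_{i∈E} be pairwise commuting real d×d matrices, each of which is Hurwitz. Then for any nonnegative reals (π_i)_{i∈E} with Σ_{i∈E} π_i = 1, the convex combination Σ_{i∈E} π_i A_i is Hurwitz. -/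
open MeasureTheory ProbabilityTheory Matrix Filter Set
open scoped RealInnerProductSpace

noncomputable section

attribute [local instance] Matrix.linftyOpNormedRing Matrix.linftyOpNormedAlgebra

set_option maxHeartbeats 1000000 in
/-- Any spectral value of a linear combination of pairwise commuting complex matrices is
the corresponding combination of spectral values of the summands (via Gelfand theory on the
commutative Banach subalgebra they generate). -/
lemma exists_spectrum_sum_smul_of_commute {d : ℕ} {E : Type*} [Fintype E]
    (B : E → Matrix (Fin d) (Fin d) ℂ) (hcomm : ∀ i j, B i * B j = B j * B i)
    (c : E → ℂ) {μ : ℂ} (hμ : μ ∈ spectrum ℂ (∑ i, c i • B i)) :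
    ∃ ν : E → ℂ, (∀ i, ν i ∈ spectrum ℂ (B i)) ∧ μ = ∑ i, c i * ν i := by
  classical
  set S := Algebra.adjoin ℂ (Set.range B) with hS
  set b : E → S := fun i => ⟨B i, Algebra.subset_adjoin (mem_range_self i)⟩ with hb
  have hsum : ((∑ i, c i • b i : S) : Matrix (Fin d) (Fin d) ℂ) = ∑ i, c i • B i :=
    map_sum S.val _ _
  have hμ' : μ ∈ spectrum ℂ (∑ i, c i • b i) := by
    apply spectrum.subset_subalgebra
    rw [hsum]; exact hμ
  have hspec : ∀ i, spectrum ℂ (b i) = spectrum ℂ (B i) := by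
    intro i
    haveI : FiniteDimensional ℂ S := FiniteDimensional.finiteDimensional_submodule S.toSubmodule
    haveI hSc : IsClosed (S : Set (Matrix (Fin d) (Fin d) ℂ)) :=
      S.toSubmodule.closed_of_finiteDimensional
    apply Subalgebra.spectrum_eq_of_isPreconnected_compl (hS := hSc)
    have : IsConnected (spectrum ℂ ((b i : Matrix (Fin d) (Fin d) ℂ)))ᶜ :=
      (Matrix.finite_spectrum _).countable.isConnected_compl_of_one_lt_rank
        (by rw [Complex.rank_real_complex]; norm_num)
    exact this.isPreconnected
  have hcomm' : ∀ a ∈ Set.range B, ∀ x ∈ Set.range B, a * x = x * a := by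
    rintro a ⟨i, rfl⟩ x ⟨j, rfl⟩; exact hcomm i j
  haveI : FiniteDimensional ℂ S := FiniteDimensional.finiteDimensional_submodule S.toSubmodule
  haveI : CompleteSpace (Matrix (Fin d) (Fin d) ℂ) := FiniteDimensional.complete ℂ _
  haveI hSc : IsClosed (S : Set (Matrix (Fin d) (Fin d) ℂ)) :=
    S.toSubmodule.closed_of_finiteDimensional
  letI : NormedCommRing S :=
    { (inferInstance : NormedRing S) with
      mul_comm := fun x y =>
        have h := Algebra.adjoin_le_centralizer_centralizer ℂ (Set.range B)
        Subtype.ext <| Set.centralizer_centralizer_comm_of_comm hcomm' _ (h x.2) _ (h y.2) }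
  letI : NormedAlgebra ℂ S :=
    { (Subalgebra.algebra S : Algebra ℂ S) with
      norm_smul_le := fun c x => norm_smul_le c (x : Matrix (Fin d) (Fin d) ℂ) }
  haveI : CompleteSpace S := hSc.completeSpace_coe
  obtain ⟨f, hf⟩ := WeakDual.CharacterSpace.mem_spectrum_iff_exists.mp hμ'
  refine ⟨fun i => f (b i), fun i => ?_, ?_⟩
  · rw [← hspec i]
    exact AlgHom.apply_mem_spectrum f (b i)
  · rw [← hf, map_sum]
    simp [smul_eq_mul]

set_option maxHeartbeats 1000000 in
/-- A convex combination of pairwise commuting Hurwitz matrices is Hurwitz. -/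
theorem commuting_convex_combination_hurwitz {d : ℕ} {E : Type*} [Fintype E]
    (A : E → Matrix (Fin d) (Fin d) ℝ) (hcomm : ∀ i j, A i * A j = A j * A i)
    (hhur : ∀ i, IsHurwitz (A i))
    (π : E → ℝ) (hπ : ∀ i, 0 ≤ π i) (hsum : ∑ i, π i = 1) :
    IsHurwitz (∑ i, π i • A i) := by
  classical
  intro μ hμ
  set B : E → Matrix (Fin d) (Fin d) ℂ := fun i => (A i).map Complex.ofReal with hB
  have hmap : (∑ i, π i • A i).map (Complex.ofReal : ℝ → ℂ)
      = ∑ i, ((π i : ℂ)) • B i := by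
    ext j k
    simp [Matrix.sum_apply, Matrix.map, hB]
  have hcommB : ∀ i j, B i * B j = B j * B i := by
    intro i j
    have e : ∀ i j : E, (A i).map Complex.ofReal * (A j).map Complex.ofReal
        = (A i * A j).map Complex.ofReal :=
      fun i j => (Matrix.map_mul (L := A i) (M := A j) (f := Complex.ofRealHom)).symm
    simp only [hB, e, hcomm]
  rw [hmap] at hμ
  obtain ⟨ν, hν, hμeq⟩ := exists_spectrum_sum_smul_of_commute B hcommB _ hμ
  have hre : ∀ i, (ν i).re < 0 := fun i => hhur i _ (hν i)
  have hμre : μ.re = ∑ i, π i * (ν i).re := by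
    rw [hμeq, Complex.re_sum]
    exact Finset.sum_congr rfl fun i _ => by simp [Complex.mul_re]
  obtain ⟨j, hj⟩ : ∃ j, π j ≠ 0 := by
    by_contra h
    push_neg at h
    simp [h] at hsum
  have hjpos : 0 < π j := lt_of_le_of_ne (hπ j) (Ne.symm hj)
  rw [hμre]
  calc ∑ i, π i * (ν i).re ≤ ∑ i, (if i = j then π j * (ν j).re else 0) := by
        apply Finset.sum_le_sum
        intro i _
        by_cases h : i = j
        · subst h; simp
        · simp only [h, if_false]
          exact mul_nonpos_of_nonneg_of_nonpos (hπ i) (hre i).le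
    _ = π j * (ν j).re := by simp
    _ < 0 := mul_neg_of_pos_of_neg hjpos (hre j)
end
end

section
/- For every λ > 0 and every θ ∈ (−π/2, 0), the quantity H(θ;λ) = exp(−2λ cot(2θ)) ∫_θ^0 exp(2λ cot(2y)) sec²(y) dy satisfies 0 < H(θ;λ) < sin²(θ)/λ. -/
open MeasureTheory ProbabilityTheory Matrix Filter Set
open scoped RealInnerProductSpace

noncomputable section

/-- `H(θ; λ) = exp(-2 λ cot(2θ)) ∫_θ^0 exp(2 λ cot(2y)) sec²(y) dy`. -/
def Hfun (lam θ : ℝ) : ℝ :=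
  Real.exp (-2 * lam * Real.cot (2 * θ)) *
    ∫ y in θ..0, Real.exp (2 * lam * Real.cot (2 * y)) / Real.cos y ^ 2

/-- The unnormalized invariant density `p̃₀(θ; λ) = λ csc²(θ) H(θ; λ)`. -/
def p0t (lam θ : ℝ) : ℝ := lam * (1 / Real.sin θ ^ 2) * Hfun lam θ

/-- The unnormalized invariant density `p̃₁(θ; λ) = sec²(θ)(1 - λ H(θ; λ))`. -/
def p1t (lam θ : ℝ) : ℝ := (1 / Real.cos θ ^ 2) * (1 - lam * Hfun lam θ)

namespace HAux
open scoped Topology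

def ff (lam y : ℝ) : ℝ := Real.exp (2 * lam * Real.cot (2 * y)) / Real.cos y ^ 2

def FF (lam y : ℝ) : ℝ := Real.exp (2 * lam * Real.cot (2 * y))

lemma FF_pos (lam y : ℝ) : 0 < FF lam y := Real.exp_pos _

lemma sin_two_neg {y : ℝ} (hy : y ∈ Ioo (-(Real.pi/2)) 0) : Real.sin (2*y) < 0 :=
  Real.sin_neg_of_neg_of_neg_pi_lt (by linarith [hy.2]) (by linarith [hy.1])

lemma cos_pos' {y : ℝ} (hy : y ∈ Ioo (-(Real.pi/2)) 0) : 0 < Real.cos y :=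
  Real.cos_pos_of_mem_Ioo ⟨hy.1, by linarith [hy.2, Real.pi_pos]⟩

lemma hasDerivAt_FF (lam y : ℝ) (hy : Real.sin (2*y) ≠ 0) :
    HasDerivAt (FF lam) (FF lam y * (-(4*lam) / Real.sin (2*y)^2)) y := by
  have h2 : HasDerivAt (fun x : ℝ => 2*x) 2 y := by
    simpa using (hasDerivAt_id y).const_mul (2:ℝ)
  have hc : HasDerivAt (fun x : ℝ => Real.cos (2*x)) (-Real.sin (2*y) * 2) y :=
    (Real.hasDerivAt_cos (2*y)).comp y h2
  have hs : HasDerivAt (fun x : ℝ => Real.sin (2*x)) (Real.cos (2*y) * 2) y :=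
    (Real.hasDerivAt_sin (2*y)).comp y h2
  have hq := (hc.div hs hy).const_mul (2*lam)
  have hexp := (Real.hasDerivAt_exp (2*lam*(Real.cos (2*y)/Real.sin (2*y)))).comp y hq
  have heq : (fun x : ℝ => Real.exp (2*lam*(Real.cos (2*x)/Real.sin (2*x)))) = FF lam := by
    funext x; simp [FF, Real.cot_eq_cos_div_sin]
  rw [Function.comp_def] at hexp; simp only [Pi.div_apply] at hexp; rw [heq] at hexp
  have hpyth := Real.sin_sq_add_cos_sq (2*y)
  have hnum : -Real.sin (2*y) * 2 * Real.sin (2*y) - Real.cos (2*y) * (Real.cos (2*y) * 2)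
      = -2 := by nlinarith [hpyth]
  rw [hnum] at hexp
  refine hexp.congr_deriv ?_
  simp only [FF, Real.cot_eq_cos_div_sin]
  ring

lemma cot_anti {a y : ℝ} (ha : -(Real.pi/2) < a) (hay : a ≤ y) (hy : y < 0) :
    Real.cot (2*y) ≤ Real.cot (2*a) := by
  have hsa : Real.sin (2*a) < 0 := sin_two_neg ⟨ha, by linarith⟩
  have hsy : Real.sin (2*y) < 0 := sin_two_neg ⟨by linarith, hy⟩
  have hkey : Real.cot (2*y) - Real.cot (2*a)
      = Real.sin (2*a - 2*y) / (Real.sin (2*y) * Real.sin (2*a)) := by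
    rw [Real.cot_eq_cos_div_sin, Real.cot_eq_cos_div_sin, Real.sin_sub]
    field_simp [hsy.ne, hsa.ne]
  have hnum : Real.sin (2*a - 2*y) ≤ 0 :=
    Real.sin_nonpos_of_nonpos_of_neg_pi_le (by linarith) (by linarith)
  have hden : 0 < Real.sin (2*y) * Real.sin (2*a) := mul_pos_of_neg_of_neg hsy hsa
  have h := div_nonpos_of_nonpos_of_nonneg hnum hden.le
  linarith [hkey ▸ h]

lemma FF_le {lam a y : ℝ} (hlam : 0 < lam) (ha : -(Real.pi/2) < a) (hay : a ≤ y) (hy : y < 0) :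
    FF lam y ≤ FF lam a := by
  have := cot_anti ha hay hy
  exact Real.exp_le_exp.2 (by nlinarith)

lemma measurable_ff (lam : ℝ) : Measurable (ff lam) := by
  unfold ff
  simp only [Real.cot_eq_cos_div_sin]
  fun_prop

lemma ff_nonneg (lam y : ℝ) : 0 ≤ ff lam y := by
  unfold ff; positivity

lemma integrableOn_ff (lam : ℝ) (hlam : 0 < lam) {a : ℝ} (ha : a ∈ Ioo (-(Real.pi/2)) 0) :
    IntegrableOn (ff lam) (Icc a 0) := by
  set C : ℝ := max (FF lam a / Real.cos a ^ 2) 1 with hC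
  have hca : 0 < Real.cos a := cos_pos' ha
  refine Integrable.mono' (integrable_const C)
    ((measurable_ff lam).aestronglyMeasurable) ?_
  rw [ae_restrict_iff' measurableSet_Icc]
  refine ae_of_all _ fun y hy => ?_
  rw [Real.norm_eq_abs, abs_of_nonneg (ff_nonneg lam y)]
  rcases eq_or_lt_of_le hy.2 with h0 | h0
  · subst h0
    have : ff lam 0 = 1 := by
      simp [ff, Real.cot_eq_cos_div_sin]
    rw [this]; exact le_max_right _ _
  · have hy' : y ∈ Ioo (-(Real.pi/2)) 0 := ⟨lt_of_lt_of_le ha.1 hy.1, h0⟩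
    have hcy : 0 < Real.cos y := cos_pos' hy'
    have hcay : Real.cos a ≤ Real.cos y := by
      have := Real.cos_le_cos_of_nonneg_of_le_pi (x := -y) (y := -a)
        (by linarith [hy'.2]) (by linarith [Real.pi_pos, ha.1]) (by linarith [hy.1])
      simpa [Real.cos_neg] using this
    have hFF : FF lam y ≤ FF lam a := FF_le hlam ha.1 hy.1 h0
    have h1 : ff lam y ≤ FF lam a / Real.cos a ^ 2 :=
      div_le_div₀ (FF_pos lam a).le hFF (by positivity)
        (pow_le_pow_left₀ hca.le hcay 2)
    exact h1.trans (le_max_left _ _)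

lemma contOn_FF (lam : ℝ) : ContinuousOn (FF lam) (Ioo (-(Real.pi/2)) 0) := by
  intro y hy
  have h1 : Real.sin (2*y) ≠ 0 := (sin_two_neg hy).ne
  have hs : ContinuousAt (fun x : ℝ => Real.sin (2*x)) y :=
    (Real.continuous_sin.comp (continuous_const.mul continuous_id)).continuousAt
  have hc : ContinuousAt (fun x : ℝ => Real.cos (2*x)) y :=
    (Real.continuous_cos.comp (continuous_const.mul continuous_id)).continuousAt
  have hq : ContinuousAt (fun x : ℝ => 2*lam*(Real.cos (2*x)/Real.sin (2*x))) y :=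
    continuousAt_const.mul (hc.div hs h1)
  have hF : ContinuousAt (FF lam) y := by
    have h := Real.continuous_exp.continuousAt.comp hq
    have heq : (fun x : ℝ => Real.exp (2*lam*(Real.cos (2*x)/Real.sin (2*x)))) = FF lam := by
      funext x; simp [FF, Real.cot_eq_cos_div_sin]
    rwa [Function.comp_def, heq] at h
  exact hF.continuousWithinAt

lemma contOn_ff (lam : ℝ) : ContinuousOn (ff lam) (Ioo (-(Real.pi/2)) 0) := by
  intro y hy
  have h2 : Real.cos y ≠ 0 := (cos_pos' hy).ne'
  have hF : ContinuousWithinAt (FF lam) (Ioo (-(Real.pi/2)) 0) y := contOn_FF lam y hy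
  exact hF.div ((Real.continuous_cos.continuousAt.pow 2).continuousWithinAt)
    (pow_ne_zero 2 h2)


lemma sin_sq_le {a y : ℝ} (ha : -(Real.pi/2) < a) (hay : a ≤ y) (hy : y ≤ 0) :
    Real.sin y ^ 2 ≤ Real.sin a ^ 2 := by
  have hmono : Real.sin a ≤ Real.sin y :=
    Real.strictMonoOn_sin.monotoneOn ⟨ha.le, by linarith [Real.pi_pos]⟩
      ⟨by linarith, by linarith [Real.pi_pos]⟩ hay
  have hsy : Real.sin y ≤ 0 := by
    rcases eq_or_lt_of_le hy with h | h
    · simp [h]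
    · exact (Real.sin_neg_of_neg_of_neg_pi_lt h (by linarith [Real.pi_pos])).le
  nlinarith

lemma integral_le (lam : ℝ) (hlam : 0 < lam) {a b : ℝ} (ha : -(Real.pi/2) < a)
    (hab : a ≤ b) (hb : b < 0) :
    (∫ y in a..b, ff lam y) ≤ Real.sin a ^ 2 / lam * (FF lam a - FF lam b) := by
  set g' : ℝ → ℝ := fun y => Real.sin a ^ 2 / lam * (FF lam y * (4*lam / Real.sin (2*y)^2))
    with hg'
  have hsub : Icc a b ⊆ Ioo (-(Real.pi/2)) 0 :=
    fun y hy => ⟨lt_of_lt_of_le ha hy.1, lt_of_le_of_lt hy.2 hb⟩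
  have huIcc : uIcc a b = Icc a b := uIcc_of_le hab
  have hderiv : ∀ y ∈ uIcc a b,
      HasDerivAt (fun y => -(Real.sin a ^ 2 / lam) * FF lam y) (g' y) y := by
    intro y hy
    rw [huIcc] at hy
    have hy' := hsub hy
    have h1 : Real.sin (2*y) ≠ 0 := (sin_two_neg hy').ne
    have h := (hasDerivAt_FF lam y h1).const_mul (-(Real.sin a ^ 2 / lam))
    have e : g' y = -(Real.sin a ^ 2 / lam) * (FF lam y * (-(4 * lam) / Real.sin (2 * y) ^ 2)) := by
      simp only [hg']; ring
    rw [e]; exact h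
  have hcontff : ContinuousOn (ff lam) (uIcc a b) := by
    rw [huIcc]; exact (contOn_ff lam).mono hsub
  have hcontg : ContinuousOn g' (uIcc a b) := by
    rw [huIcc]
    apply continuousOn_const.mul
    apply ((contOn_FF lam).mono hsub).mul
    apply ContinuousOn.div continuousOn_const
    · exact ((Real.continuous_sin.comp (continuous_const.mul continuous_id)).pow 2).continuousOn
    · intro y hy
      exact pow_ne_zero 2 (sin_two_neg (hsub hy)).ne
  have hint : IntervalIntegrable (ff lam) volume a b := hcontff.intervalIntegrable
  have hintg : IntervalIntegrable g' volume a b := hcontg.intervalIntegrable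
  have hFTC := intervalIntegral.integral_eq_sub_of_hasDerivAt hderiv hintg
  have hptwise : ∀ y ∈ Icc a b, ff lam y ≤ g' y := by
    intro y hy
    have hy' := hsub hy
    have hsy : Real.sin y < 0 :=
      Real.sin_neg_of_neg_of_neg_pi_lt hy'.2 (by linarith [Real.pi_pos, hy'.1])
    have hcy : 0 < Real.cos y := cos_pos' hy'
    have e1 : ff lam y = FF lam y / (Real.cos y ^ 2 * Real.sin y ^ 2) * Real.sin y ^ 2 := by
      unfold ff FF
      field_simp [hsy.ne, hcy.ne']
    have e2 : g' y = FF lam y / (Real.cos y ^ 2 * Real.sin y ^ 2) * Real.sin a ^ 2 := by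
      simp only [hg', Real.sin_two_mul]
      field_simp [hsy.ne, hcy.ne', hlam.ne']
      ring
    rw [e1, e2]
    have hfac : 0 ≤ FF lam y / (Real.cos y ^ 2 * Real.sin y ^ 2) := by
      have := FF_pos lam y
      positivity
    exact mul_le_mul_of_nonneg_left (sin_sq_le ha hy.1 (hy.2.trans hb.le)) hfac
  have hmono := intervalIntegral.integral_mono_on hab hint hintg hptwise
  rw [hFTC] at hmono
  linarith [hmono]

lemma tendsto_inv_zero_atBot' : Tendsto (fun x : ℝ => x⁻¹) (𝓝[<] (0:ℝ)) atBot := by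
  have hneg : Tendsto (fun x : ℝ => -x) (𝓝[<] (0:ℝ)) (𝓝[>] (0:ℝ)) := by
    refine tendsto_nhdsWithin_of_tendsto_nhds_of_eventually_within _ ?_ ?_
    · simpa using (continuous_neg.tendsto (0:ℝ)).mono_left nhdsWithin_le_nhds
    · filter_upwards [self_mem_nhdsWithin] with x hx
      simpa using hx
  have h1 := tendsto_inv_nhdsGT_zero.comp hneg
  have h2 := tendsto_neg_atTop_atBot.comp h1
  have : (fun x : ℝ => -(-x)⁻¹) = fun x : ℝ => x⁻¹ := by
    funext x; rw [inv_neg]; ring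
  rwa [Function.comp_def, Function.comp_def, this] at h2

lemma tendsto_FF_zero (lam : ℝ) (hlam : 0 < lam) {a : ℝ} (ha : a ∈ Ioo (-(Real.pi/2)) 0) :
    Tendsto (FF lam) (𝓝[Ioo a 0] 0) (𝓝 0) := by
  have hsin : Tendsto (fun b => Real.sin (2*b)) (𝓝[Ioo a 0] 0) (𝓝[<] 0) := by
    refine tendsto_nhdsWithin_of_tendsto_nhds_of_eventually_within _ ?_ ?_
    · have hcont : Continuous fun b : ℝ => Real.sin (2*b) := by fun_prop
      exact (hcont.tendsto' 0 0 (by simp)).mono_left nhdsWithin_le_nhds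
    · filter_upwards [self_mem_nhdsWithin] with b hb
      exact sin_two_neg ⟨lt_trans ha.1 hb.1, hb.2⟩
  have hinv : Tendsto (fun b => (Real.sin (2*b))⁻¹) (𝓝[Ioo a 0] 0) atBot :=
    tendsto_inv_zero_atBot'.comp hsin
  have hcos : Tendsto (fun b => Real.cos (2*b)) (𝓝[Ioo a 0] 0) (𝓝 1) := by
    have hcont : Continuous fun b : ℝ => Real.cos (2*b) := by fun_prop
    exact (hcont.tendsto' 0 1 (by simp)).mono_left nhdsWithin_le_nhds
  have hcot : Tendsto (fun b => Real.cos (2*b) * (Real.sin (2*b))⁻¹) (𝓝[Ioo a 0] 0) atBot :=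
    Filter.Tendsto.pos_mul_atBot zero_lt_one hcos hinv
  have harg : Tendsto (fun b => 2 * lam * Real.cot (2*b)) (𝓝[Ioo a 0] 0) atBot := by
    have h := hcot.const_mul_atBot (r := 2*lam) (by positivity)
    have heq : (fun b => 2 * lam * (Real.cos (2*b) * (Real.sin (2*b))⁻¹))
        = fun b => 2 * lam * Real.cot (2*b) := by
      funext b; rw [Real.cot_eq_cos_div_sin, div_eq_mul_inv]
    rwa [heq] at h
  have h := Real.tendsto_exp_atBot.comp harg
  rwa [Function.comp_def] at h

lemma integral_to_zero_le (lam : ℝ) (hlam : 0 < lam) {a : ℝ}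
    (ha : a ∈ Ioo (-(Real.pi/2)) 0) :
    (∫ y in a..0, ff lam y) ≤ Real.sin a ^ 2 / lam * FF lam a := by
  have hint := integrableOn_ff lam hlam ha
  set φ : ℝ → ℝ := fun b => ∫ y in a..b, ff lam y with hφ
  have hφcont : ContinuousOn φ (Icc a 0) := by
    have h := intervalIntegral.continuousOn_primitive (μ := volume) (f := ff lam)
      (a := a) (b := 0) hint
    exact h.congr fun x hx => intervalIntegral.integral_of_le hx.1
  haveI : (𝓝[Ioo a 0] (0:ℝ)).NeBot := right_nhdsWithin_Ioo_neBot ha.2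
  have hlim : Tendsto φ (𝓝[Ioo a 0] 0) (𝓝 (φ 0)) :=
    ((hφcont 0 (right_mem_Icc.2 ha.2.le)).mono Ioo_subset_Icc_self)
  have hFlim : Tendsto (fun b => Real.sin a ^ 2 / lam * (FF lam a - FF lam b))
      (𝓝[Ioo a 0] 0) (𝓝 (Real.sin a ^ 2 / lam * (FF lam a - 0))) :=
    tendsto_const_nhds.mul (tendsto_const_nhds.sub (tendsto_FF_zero lam hlam ha))
  have hle : ∀ᶠ b in 𝓝[Ioo a 0] 0,
      φ b ≤ Real.sin a ^ 2 / lam * (FF lam a - FF lam b) := by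
    filter_upwards [self_mem_nhdsWithin] with b hb
    exact integral_le lam hlam ha.1 hb.1.le hb.2
  have := le_of_tendsto_of_tendsto hlim hFlim hle
  simpa using this

end HAux

/-- For `λ > 0` and `θ ∈ (-π/2, 0)` one has `0 < H(θ; λ) < sin²(θ)/λ`. -/
theorem H_bounds (lam : ℝ) (hlam : 0 < lam) (θ : ℝ)
    (hθ : θ ∈ Set.Ioo (-(Real.pi / 2)) (0 : ℝ)) :
    0 < Hfun lam θ ∧ Hfun lam θ < Real.sin θ ^ 2 / lam := by
  obtain ⟨hθ1, hθ2⟩ := hθ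
  have hθmem : θ ∈ Set.Ioo (-(Real.pi/2)) 0 := ⟨hθ1, hθ2⟩
  have hii : IntervalIntegrable (HAux.ff lam) volume θ 0 := by
    rw [intervalIntegrable_iff_integrableOn_Icc_of_le hθ2.le]
    exact HAux.integrableOn_ff lam hlam hθmem
  have hpos : 0 < ∫ y in θ..0, HAux.ff lam y := by
    refine intervalIntegral.intervalIntegral_pos_of_pos_on hii ?_ hθ2
    intro y hy
    have hy' : y ∈ Set.Ioo (-(Real.pi/2)) 0 := ⟨lt_trans hθ1 hy.1, hy.2⟩
    have := HAux.cos_pos' hy'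
    unfold HAux.ff
    positivity
  have hHeq : Hfun lam θ
      = Real.exp (-2*lam*Real.cot (2*θ)) * ∫ y in θ..0, HAux.ff lam y := rfl
  have hFθ : 0 < HAux.FF lam θ := HAux.FF_pos lam θ
  constructor
  · rw [hHeq]; exact mul_pos (Real.exp_pos _) hpos
  · set m := θ/2 with hm'
    have hm : m ∈ Set.Ioo (-(Real.pi/2)) 0 := ⟨by linarith, by linarith⟩
    have hθm : θ < m := by linarith
    have hii1 : IntervalIntegrable (HAux.ff lam) volume θ m := by
      apply ContinuousOn.intervalIntegrable
      apply (HAux.contOn_ff lam).mono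
      rw [Set.uIcc_of_le hθm.le]
      exact fun y hy => ⟨lt_of_lt_of_le hθ1 hy.1, lt_of_le_of_lt hy.2 hm.2⟩
    have hii2 : IntervalIntegrable (HAux.ff lam) volume m 0 := by
      rw [intervalIntegrable_iff_integrableOn_Icc_of_le hm.2.le]
      exact HAux.integrableOn_ff lam hlam hm
    have hsplit := intervalIntegral.integral_add_adjacent_intervals hii1 hii2
    have h1 := HAux.integral_le lam hlam hθ1 hθm.le hm.2
    have h2 := HAux.integral_to_zero_le lam hlam hm
    have hsm : Real.sin m ^ 2 < Real.sin θ ^ 2 := by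
      have ha1 : Real.sin θ < Real.sin m :=
        Real.strictMonoOn_sin ⟨hθ1.le, by linarith [Real.pi_pos]⟩
          ⟨hm.1.le, by linarith [Real.pi_pos]⟩ hθm
      have ha2 : Real.sin m < 0 :=
        Real.sin_neg_of_neg_of_neg_pi_lt hm.2 (by linarith [Real.pi_pos])
      nlinarith
    have hFm : 0 < HAux.FF lam m := HAux.FF_pos lam m
    have htot : (∫ y in θ..0, HAux.ff lam y)
        < Real.sin θ ^ 2 / lam * HAux.FF lam θ := by
      rw [← hsplit]
      have key : Real.sin m ^ 2 / lam * HAux.FF lam m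
          < Real.sin θ ^ 2 / lam * HAux.FF lam m :=
        mul_lt_mul_of_pos_right ((div_lt_div_iff_of_pos_right hlam).2 hsm) hFm
      have h1' : Real.sin θ ^ 2 / lam * (HAux.FF lam θ - HAux.FF lam m)
          = Real.sin θ ^ 2 / lam * HAux.FF lam θ
            - Real.sin θ ^ 2 / lam * HAux.FF lam m := by ring
      rw [h1'] at h1
      linarith [h1, h2, key]
    rw [hHeq]
    have he : Real.exp (-2*lam*Real.cot (2*θ)) = (HAux.FF lam θ)⁻¹ := by
      unfold HAux.FF
      rw [← Real.exp_neg]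
      ring_nf
    rw [he, inv_mul_lt_iff₀ hFθ, mul_comm]
    exact htot
end
end

section
/- For every λ > 0 and every θ ∈ (−π/2, 0), the unnormalized invariant densities satisfy p̃_0(θ;λ) < p̃_1(θ;λ), i.e. λ csc²(θ) H(θ;λ) < sec²(θ)(1 − λ H(θ;λ)). -/
open MeasureTheory ProbabilityTheory Matrix Filter Set
open scoped RealInnerProductSpace

noncomputable section

private lemma cot2_hasDerivAt {y : ℝ} (hy : y ∈ Set.Ioo (-(Real.pi / 2)) (0:ℝ)) :
    HasDerivAt (fun t : ℝ => Real.cot (2 * t)) (-2 / Real.sin (2 * y) ^ 2) y := by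
  have hs2 : Real.sin (2 * y) < 0 := by
    apply Real.sin_neg_of_neg_of_neg_pi_lt (by linarith [hy.2]) (by linarith [hy.1])
  have hfun : (fun t : ℝ => Real.cot (2 * t)) =
      fun t : ℝ => Real.cos (2 * t) / Real.sin (2 * t) := by
    funext t; exact Real.cot_eq_cos_div_sin _
  rw [hfun]
  have h2t : HasDerivAt (fun t : ℝ => 2 * t) 2 y := by
    simpa using (hasDerivAt_id y).const_mul 2
  have hc : HasDerivAt (fun t : ℝ => Real.cos (2 * t)) (-Real.sin (2 * y) * 2) y :=
    (Real.hasDerivAt_cos (2 * y)).comp y h2t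
  have hs : HasDerivAt (fun t : ℝ => Real.sin (2 * t)) (Real.cos (2 * y) * 2) y :=
    (Real.hasDerivAt_sin (2 * y)).comp y h2t
  have := hc.div hs hs2.ne
  refine this.congr_deriv ?_
  have hpyth := Real.sin_sq_add_cos_sq (2 * y)
  have hnum : -Real.sin (2 * y) * 2 * Real.sin (2 * y) - Real.cos (2 * y) * (Real.cos (2 * y) * 2)
      = -2 := by nlinarith [hpyth]
  rw [hnum]

private lemma F_hasDerivAt (lam : ℝ) {y : ℝ} (hy : y ∈ Set.Ioo (-(Real.pi / 2)) (0:ℝ)) :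
    HasDerivAt (fun t : ℝ => Real.sin t ^ 2 * Real.exp (2 * lam * Real.cot (2 * t)))
      (Real.exp (2 * lam * Real.cot (2 * y)) * (Real.sin (2 * y) - lam / Real.cos y ^ 2)) y := by
  have hcos : 0 < Real.cos y := Real.cos_pos_of_mem_Ioo ⟨hy.1, lt_trans hy.2 (by positivity)⟩
  have hsin : Real.sin y < 0 :=
    Real.sin_neg_of_neg_of_neg_pi_lt hy.2 (by linarith [hy.1, Real.pi_pos])
  have hexp : HasDerivAt (fun t : ℝ => Real.exp (2 * lam * Real.cot (2 * t)))
      (Real.exp (2 * lam * Real.cot (2 * y)) * (2 * lam * (-2 / Real.sin (2 * y) ^ 2))) y := by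
    have h1 : HasDerivAt (fun t : ℝ => 2 * lam * Real.cot (2 * t))
        (2 * lam * (-2 / Real.sin (2 * y) ^ 2)) y := (cot2_hasDerivAt hy).const_mul (2 * lam)
    simpa [mul_comm] using h1.exp
  have hsq : HasDerivAt (fun t : ℝ => Real.sin t ^ 2) (2 * Real.sin y * Real.cos y) y := by
    exact ((Real.hasDerivAt_sin y).pow 2).congr_deriv (by ring)
  have := hsq.mul hexp
  refine this.congr_deriv ?_
  rw [Real.sin_two_mul]
  field_simp [hsin.ne, hcos.ne']
  ring

private lemma contE (lam : ℝ) {y : ℝ} (hy : y ∈ Set.Ioo (-(Real.pi / 2)) (0:ℝ)) :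
    ContinuousAt (fun t : ℝ => Real.exp (2 * lam * Real.cot (2 * t))) y :=
  Real.continuous_exp.continuousAt.comp
    (continuousAt_const.mul (cot2_hasDerivAt hy).differentiableAt.continuousAt)

set_option maxHeartbeats 800000 in
/-- For `λ > 0` and `θ ∈ (-π/2, 0)` the unnormalized invariant densities satisfy
`p̃₀(θ; λ) < p̃₁(θ; λ)`, i.e. `λ csc²(θ) H(θ;λ) < sec²(θ)(1 - λ H(θ;λ))`. -/
theorem p0_lt_p1 (lam : ℝ) (hlam : 0 < lam) (θ : ℝ)
    (hθ : θ ∈ Set.Ioo (-(Real.pi / 2)) (0 : ℝ)) :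
    p0t lam θ < p1t lam θ := by
  obtain ⟨hθ1, hθ2⟩ := hθ
  have hpi := Real.pi_pos
  set E : ℝ → ℝ := fun y => Real.exp (2 * lam * Real.cot (2 * y)) with hE
  set g : ℝ → ℝ := fun y => Real.exp (2 * lam * Real.cot (2 * y)) / Real.cos y ^ 2 with hg
  set F : ℝ → ℝ := fun y => Real.sin y ^ 2 * E y with hF
  -- the strictly positive quantity c
  set c : ℝ := ∫ y in θ..(θ/2), E y * (-Real.sin (2 * y)) with hc
  have hsubhalf : Set.Icc θ (θ/2) ⊆ Set.Ioo (-(Real.pi / 2)) (0:ℝ) := by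
    intro x hx; exact ⟨lt_of_lt_of_le hθ1 hx.1, lt_of_le_of_lt hx.2 (by linarith)⟩
  have hcontc : ContinuousOn (fun y => E y * (-Real.sin (2 * y))) (Set.Icc θ (θ/2)) := by
    intro x hx
    exact (ContinuousAt.mul (contE lam (hsubhalf hx))
      ((Real.continuous_sin.comp (continuous_const.mul continuous_id)).neg.continuousAt)).continuousWithinAt
  have hintc : IntervalIntegrable (fun y => E y * (-Real.sin (2 * y))) volume θ (θ/2) := by
    apply ContinuousOn.intervalIntegrable
    rwa [Set.uIcc_of_le (by linarith)]
  have hcpos : 0 < c := by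
    apply intervalIntegral.intervalIntegral_pos_of_pos_on hintc _ (by linarith)
    intro x hx
    have hmem : x ∈ Set.Ioo (-(Real.pi / 2)) (0:ℝ) :=
      hsubhalf ⟨hx.1.le, hx.2.le⟩
    have : Real.sin (2 * x) < 0 :=
      Real.sin_neg_of_neg_of_neg_pi_lt (by linarith [hmem.2]) (by linarith [hmem.1])
    have hEpos : 0 < E x := Real.exp_pos _
    nlinarith
  -- choose ε
  set ε : ℝ := max (θ/2) (max (-(Real.pi/8)) (-(c/(4*lam)))) with hε
  have hεθ2 : θ/2 ≤ ε := le_max_left _ _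
  have hεpi : -(Real.pi/8) ≤ ε := le_trans (le_max_left _ _) (le_max_right _ _)
  have hεc : -(c/(4*lam)) ≤ ε := le_trans (le_max_right _ _) (le_max_right _ _)
  have hεneg : ε < 0 := by
    apply max_lt (by linarith)
    exact max_lt (by linarith) (neg_lt_zero.mpr (div_pos hcpos (by linarith)))
  have hθε : θ < ε := by linarith
  have hεmem : ε ∈ Set.Ioo (-(Real.pi / 2)) (0:ℝ) := ⟨by linarith, hεneg⟩
  have hsubθε : Set.Icc θ ε ⊆ Set.Ioo (-(Real.pi / 2)) (0:ℝ) := by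
    intro x hx; exact ⟨lt_of_lt_of_le hθ1 hx.1, lt_of_le_of_lt hx.2 hεneg⟩
  -- FTC on [θ, ε]
  have hFTC : ∫ y in θ..ε, E y * (Real.sin (2 * y) - lam / Real.cos y ^ 2) = F ε - F θ := by
    apply intervalIntegral.integral_eq_sub_of_hasDerivAt
    · intro x hx
      rw [Set.uIcc_of_le hθε.le] at hx
      exact F_hasDerivAt lam (hsubθε hx)
    · apply ContinuousOn.intervalIntegrable
      rw [Set.uIcc_of_le hθε.le]
      intro x hx
      have hmem := hsubθε hx
      have hcos : 0 < Real.cos x := Real.cos_pos_of_mem_Ioo ⟨hmem.1, lt_trans hmem.2 (by positivity)⟩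
      exact (ContinuousAt.mul (contE lam hmem)
        (((Real.continuous_sin.comp (continuous_const.mul continuous_id)).continuousAt).sub
          (continuousAt_const.div ((Real.continuous_cos.pow 2).continuousAt) (pow_ne_zero 2 hcos.ne')))).continuousWithinAt
  -- continuity/integrability of g and of E·(−sin 2y) on [θ, ε]
  have hcong : ContinuousOn g (Set.Icc θ ε) := by
    intro x hx
    have hmem := hsubθε hx
    have hcos : 0 < Real.cos x := Real.cos_pos_of_mem_Ioo ⟨hmem.1, lt_trans hmem.2 (by positivity)⟩
    exact ((contE lam hmem).div ((Real.continuous_cos.pow 2).continuousAt) (pow_ne_zero 2 hcos.ne')).continuousWithinAt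
  have hintg1 : IntervalIntegrable g volume θ ε := by
    apply ContinuousOn.intervalIntegrable; rwa [Set.uIcc_of_le hθε.le]
  have hints : IntervalIntegrable (fun y => E y * (-Real.sin (2 * y))) volume θ ε := by
    apply ContinuousOn.intervalIntegrable
    rw [Set.uIcc_of_le hθε.le]
    intro x hx
    exact (ContinuousAt.mul (contE lam (hsubθε hx))
      ((Real.continuous_sin.comp (continuous_const.mul continuous_id)).neg.continuousAt)).continuousWithinAt
  have hintlamg : IntervalIntegrable (fun y => lam * g y) volume θ ε := hintg1.const_mul lam
  -- rewrite FTC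
  have hsplit : lam * (∫ y in θ..ε, g y) + (∫ y in θ..ε, E y * (-Real.sin (2 * y)))
      = F θ - F ε := by
    have h1 : (fun y => lam * g y + E y * (-Real.sin (2 * y)))
        = fun y => -(E y * (Real.sin (2 * y) - lam / Real.cos y ^ 2)) := by
      funext y; simp only [hg, hE]; ring
    have h2 : ∫ y in θ..ε, (lam * g y + E y * (-Real.sin (2 * y))) = F θ - F ε := by
      rw [h1, intervalIntegral.integral_neg, hFTC]; ring
    rw [← h2, intervalIntegral.integral_add hintlamg hints, intervalIntegral.integral_const_mul]
  -- lower bound for the sin-part of the integral: ≥ c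
  have hints2 : IntervalIntegrable (fun y => E y * (-Real.sin (2 * y))) volume (θ/2) ε := by
    apply ContinuousOn.intervalIntegrable
    rw [Set.uIcc_of_le hεθ2]
    intro x hx
    have hmem : x ∈ Set.Ioo (-(Real.pi / 2)) (0:ℝ) :=
      ⟨by linarith [hx.1], lt_of_le_of_lt hx.2 hεneg⟩
    exact (ContinuousAt.mul (contE lam hmem)
      ((Real.continuous_sin.comp (continuous_const.mul continuous_id)).neg.continuousAt)).continuousWithinAt
  have hslow : c ≤ ∫ y in θ..ε, E y * (-Real.sin (2 * y)) := by
    rw [← intervalIntegral.integral_add_adjacent_intervals hintc hints2]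
    have : 0 ≤ ∫ y in (θ/2)..ε, E y * (-Real.sin (2 * y)) := by
      apply intervalIntegral.integral_nonneg hεθ2
      intro u hu
      have hmem : u ∈ Set.Ioo (-(Real.pi / 2)) (0:ℝ) :=
        ⟨by linarith [hu.1], lt_of_le_of_lt hu.2 hεneg⟩
      have : Real.sin (2 * u) < 0 :=
        Real.sin_neg_of_neg_of_neg_pi_lt (by linarith [hmem.2]) (by linarith [hmem.1])
      have hEpos : 0 < E u := Real.exp_pos _
      nlinarith
    linarith
  have hFεnn : 0 ≤ F ε := by
    have : 0 < E ε := Real.exp_pos _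
    positivity
  have hA : lam * (∫ y in θ..ε, g y) ≤ F θ - c := by linarith
  -- integrability of g on [ε, 0] with bound 2
  have hbound : ∀ y ∈ Set.Icc ε (0:ℝ), g y ≤ 2 ∧ 0 ≤ g y := by
    intro y hy
    have hgnn : 0 ≤ g y := div_nonneg (Real.exp_pos _).le (sq_nonneg _)
    refine ⟨?_, hgnn⟩
    rcases eq_or_lt_of_le hy.2 with h0 | h0
    · subst h0
      simp [hg, Real.cot_eq_cos_div_sin]
    · have hy8 : -(Real.pi/8) ≤ y := le_trans hεpi hy.1
      have hsin2 : Real.sin (2 * y) < 0 :=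
        Real.sin_neg_of_neg_of_neg_pi_lt (by linarith) (by linarith)
      have hcos2 : 0 ≤ Real.cos (2 * y) := by
        apply Real.cos_nonneg_of_mem_Icc
        constructor <;> [linarith; linarith]
      have hcot : Real.cot (2 * y) ≤ 0 := by
        rw [Real.cot_eq_cos_div_sin]
        exact div_nonpos_of_nonneg_of_nonpos hcos2 hsin2.le
      have hEle : Real.exp (2 * lam * Real.cot (2 * y)) ≤ 1 := by
        rw [← Real.exp_zero]
        apply Real.exp_le_exp.mpr
        nlinarith
      have hcosy : Real.cos (Real.pi/4) ≤ Real.cos y := by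
        rw [← Real.cos_abs y]
        apply Real.cos_le_cos_of_nonneg_of_le_pi (abs_nonneg _) (by linarith)
        rw [abs_le]; constructor <;> linarith
      have hsq2 : Real.sqrt 2 ^ 2 = 2 := Real.sq_sqrt (by norm_num)
      have hsqrt2 : (1:ℝ) ≤ Real.sqrt 2 := by nlinarith [Real.sqrt_nonneg 2]
      have hcossq : (1:ℝ)/2 ≤ Real.cos y ^ 2 := by
        rw [Real.cos_pi_div_four] at hcosy
        nlinarith [Real.sqrt_nonneg 2]
      have h2 : g y ≤ 1 / (1/2 : ℝ) := div_le_div₀ (by norm_num) hEle (by norm_num) hcossq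
      norm_num at h2
      exact h2
  have hmeasg : Measurable g := by
    have hcot : (fun y : ℝ => Real.cot (2 * y)) = fun y => Real.cos (2 * y) / Real.sin (2 * y) := by
      funext t; exact Real.cot_eq_cos_div_sin _
    apply Measurable.div
    · apply Real.measurable_exp.comp
      apply Measurable.const_mul
      rw [hcot]
      exact (Real.measurable_cos.comp (measurable_id.const_mul 2)).div
        (Real.measurable_sin.comp (measurable_id.const_mul 2))
    · exact Real.measurable_cos.pow_const 2
  have hintg2 : IntervalIntegrable g volume ε 0 := by
    rw [intervalIntegrable_iff_integrableOn_Ioc_of_le hεneg.le]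
    apply Measure.integrableOn_of_bounded (M := 2) measure_Ioc_lt_top.ne
      hmeasg.aestronglyMeasurable
    filter_upwards [ae_restrict_mem measurableSet_Ioc] with y hy
    have hb := hbound y ⟨hy.1.le, hy.2⟩
    rw [Real.norm_eq_abs, abs_le]
    constructor <;> linarith [hb.1, hb.2]
  -- upper bound for the tail integral
  have htail : ∫ y in ε..0, g y ≤ -2 * ε := by
    have h2 : ∫ y in ε..0, g y ≤ ∫ _y in ε..0, (2:ℝ) := by
      apply intervalIntegral.integral_mono_on hεneg.le hintg2 intervalIntegrable_const
      intro x hx; exact (hbound x hx).1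
    rw [intervalIntegral.integral_const, smul_eq_mul] at h2
    linarith
  -- combine
  have hGsplit : (∫ y in θ..0, g y) = (∫ y in θ..ε, g y) + ∫ y in ε..0, g y :=
    (intervalIntegral.integral_add_adjacent_intervals hintg1 hintg2).symm
  have hεc2 : lam * (-2 * ε) ≤ c / 2 := by
    have : -ε ≤ c/(4*lam) := by linarith
    have h4 : 0 < 4 * lam := by positivity
    rw [le_div_iff₀ h4] at this
    nlinarith [this]
  have hmain : lam * (∫ y in θ..0, g y) < F θ := by
    rw [hGsplit, mul_add]
    have : lam * (∫ y in ε..0, g y) ≤ c/2 := by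
      calc lam * (∫ y in ε..0, g y) ≤ lam * (-2 * ε) := by
            apply mul_le_mul_of_nonneg_left htail hlam.le
        _ ≤ c/2 := hεc2
    linarith
  -- final algebra
  have hcosθ : 0 < Real.cos θ := Real.cos_pos_of_mem_Ioo ⟨hθ1, lt_trans hθ2 (by positivity)⟩
  have hsinθ : Real.sin θ < 0 := Real.sin_neg_of_neg_of_neg_pi_lt hθ2 (by linarith)
  have hs : 0 < Real.sin θ ^ 2 := by nlinarith [hsinθ]
  have hco : 0 < Real.cos θ ^ 2 := by positivity
  have hGnn : 0 ≤ ∫ y in θ..0, g y := by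
    apply intervalIntegral.integral_nonneg hθ2.le
    intro u _
    exact div_nonneg (Real.exp_pos _).le (sq_nonneg _)
  have hHrw : Hfun lam θ = (E θ)⁻¹ * ∫ y in θ..0, g y := by
    rw [Hfun, hE]
    congr 1
    rw [show (-2 : ℝ) * lam * Real.cot (2 * θ) = -(2 * lam * Real.cot (2 * θ)) by ring,
      Real.exp_neg]
  have hEθ : 0 < E θ := Real.exp_pos _
  have hHnn : 0 ≤ Hfun lam θ := by
    rw [hHrw]; exact mul_nonneg (inv_nonneg.mpr hEθ.le) hGnn
  have hh : lam * Hfun lam θ < Real.sin θ ^ 2 := by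
    rw [hHrw]
    calc lam * ((E θ)⁻¹ * ∫ y in θ..0, g y)
        = (lam * ∫ y in θ..0, g y) * (E θ)⁻¹ := by ring
      _ < F θ * (E θ)⁻¹ := by
          apply mul_lt_mul_of_pos_right hmain (by positivity)
      _ = Real.sin θ ^ 2 := by
          rw [hF]; field_simp
  have hpyth : Real.sin θ ^ 2 + Real.cos θ ^ 2 = 1 := Real.sin_sq_add_cos_sq θ
  have hHs : 0 ≤ lam * Hfun lam θ := mul_nonneg hlam.le hHnn
  have h1 : p0t lam θ = (lam * Hfun lam θ) / Real.sin θ ^ 2 := by rw [p0t]; ring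
  have h2 : p1t lam θ = (1 - lam * Hfun lam θ) / Real.cos θ ^ 2 := by rw [p1t]; ring
  rw [h1, h2, div_lt_div_iff₀ hs hco]
  have hkey : lam * Hfun lam θ * Real.sin θ ^ 2 + lam * Hfun lam θ * Real.cos θ ^ 2
      = lam * Hfun lam θ := by
    calc lam * Hfun lam θ * Real.sin θ ^ 2 + lam * Hfun lam θ * Real.cos θ ^ 2
        = lam * Hfun lam θ * (Real.sin θ ^ 2 + Real.cos θ ^ 2) := by ring
      _ = lam * Hfun lam θ := by rw [hpyth, mul_one]
  nlinarith [hh, hkey]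
end
end

section
/- For every λ > 0, the function θ ↦ (p̃_0(θ;λ) − p̃_1(θ;λ)) cos(θ) sin(θ) is integrable on (−π/2, 0) and its integral is strictly positive: ∫_{−π/2}^0 (p̃_0(θ;λ) − p̃_1(θ;λ)) cos(θ) sin(θ) dθ > 0. -/
open MeasureTheory ProbabilityTheory Matrix Filter Set
open scoped RealInnerProductSpace

noncomputable section

namespace GPos

open Filter Topology

def Ef (lam y : ℝ) : ℝ := Real.exp (2 * lam * Real.cot (2 * y))
def f0 (lam y : ℝ) : ℝ := Real.exp (2 * lam * Real.cot (2 * y)) / Real.cos y ^ 2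
def f1 (lam y : ℝ) : ℝ := Real.exp (2 * lam * Real.cot (2 * y)) * Real.sin (2 * y)
def Bf (lam θ : ℝ) : ℝ := Real.exp (-2 * lam * Real.cot (2 * θ))
def I1 (lam θ : ℝ) : ℝ := ∫ y in θ..0, f1 lam y

variable {lam θ : ℝ}

-- basic sign facts
lemma sin_neg_of (θ : ℝ) (h1 : -(Real.pi/2) < θ) (h2 : θ < 0) : Real.sin θ < 0 :=
  Real.sin_neg_of_neg_of_neg_pi_lt h2 (by linarith [Real.pi_pos])

lemma cos_pos_of (θ : ℝ) (h1 : -(Real.pi/2) < θ) (h2 : θ < 0) : 0 < Real.cos θ :=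
  Real.cos_pos_of_mem_Ioo ⟨by linarith, by linarith [Real.pi_pos]⟩

lemma sin2_neg_of (θ : ℝ) (h1 : -(Real.pi/2) < θ) (h2 : θ < 0) : Real.sin (2*θ) < 0 :=
  Real.sin_neg_of_neg_of_neg_pi_lt (by linarith) (by linarith)

lemma cot_sub_pi (x : ℝ) : Real.cot (x - Real.pi) = Real.cot x := by
  rw [Real.cot_eq_cos_div_sin, Real.cot_eq_cos_div_sin, Real.cos_sub_pi, Real.sin_sub_pi,
    neg_div_neg_eq]

-- antitonicity of cot x - 1/x on (0, π)
lemma cot_sub_inv_antitone : AntitoneOn (fun x : ℝ => Real.cot x - 1/x) (Ioo 0 Real.pi) := by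
  have hfun : (fun x : ℝ => Real.cot x - 1/x)
      = fun x => Real.cos x / Real.sin x - 1/x := by
    funext x; rw [Real.cot_eq_cos_div_sin]
  rw [hfun]
  have hderiv : ∀ x ∈ Ioo (0:ℝ) Real.pi,
      HasDerivAt (fun x => Real.cos x / Real.sin x - 1/x)
        ((-Real.sin x * Real.sin x - Real.cos x * Real.cos x) / Real.sin x ^ 2 + 1/x^2) x := by
    intro x hx
    have hs : Real.sin x ≠ 0 := (Real.sin_pos_of_pos_of_lt_pi hx.1 hx.2).ne'
    have h1 : HasDerivAt (fun x => Real.cos x / Real.sin x)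
        ((-Real.sin x * Real.sin x - Real.cos x * Real.cos x) / Real.sin x ^ 2) x :=
      (Real.hasDerivAt_cos x).div (Real.hasDerivAt_sin x) hs
    have h2 : HasDerivAt (fun x : ℝ => 1/x) (-(1/x^2)) x := by
      simpa [one_div] using (hasDerivAt_inv hx.1.ne')
    exact (h1.sub h2).congr_deriv (by ring)
  apply antitoneOn_of_deriv_nonpos (convex_Ioo 0 Real.pi)
  · exact fun x hx => ((hderiv x hx).continuousAt).continuousWithinAt
  · intro x hx
    rw [interior_Ioo] at hx
    exact (hderiv x hx).differentiableAt.differentiableWithinAt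
  · intro x hx
    rw [interior_Ioo] at hx
    rw [(hderiv x hx).deriv]
    have hsp : 0 < Real.sin x := Real.sin_pos_of_pos_of_lt_pi hx.1 hx.2
    have hsx : Real.sin x ≤ x := Real.sin_le hx.1.le
    have h1 : Real.sin x ^ 2 ≤ x ^ 2 := by nlinarith
    have h2 : (1:ℝ)/x^2 ≤ 1/Real.sin x ^2 := by
      apply one_div_le_one_div_of_le (by positivity) h1
    have h3 : (-Real.sin x * Real.sin x - Real.cos x * Real.cos x) = -1 := by
      nlinarith [Real.sin_sq_add_cos_sq x]
    rw [h3]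
    have : (-1 : ℝ)/Real.sin x^2 = -(1/Real.sin x^2) := by ring
    rw [this]
    linarith

-- key cot difference inequality
lemma key_cot {θ y : ℝ} (h1 : -(Real.pi/2) < θ) (hθy : θ ≤ y) (hy : y < 0) :
    1/(2*θ + Real.pi) - 1/(2*y + Real.pi) ≤ Real.cot (2*θ) - Real.cot (2*y) := by
  have ha : (0:ℝ) < 2*θ + Real.pi := by linarith
  have hb : 2*y + Real.pi < Real.pi := by linarith
  have hab : 2*θ + Real.pi ≤ 2*y + Real.pi := by linarith
  have h2θ : Real.cot (2*θ) = Real.cot (2*θ + Real.pi) := by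
    rw [← cot_sub_pi (2*θ + Real.pi)]; ring_nf
  have h2y : Real.cot (2*y) = Real.cot (2*y + Real.pi) := by
    rw [← cot_sub_pi (2*y + Real.pi)]; ring_nf
  have := cot_sub_inv_antitone ⟨ha, by linarith⟩ ⟨by linarith, hb⟩ hab
  rw [h2θ, h2y]
  dsimp at this
  linarith

-- cot upper bound on [θ, 0]
lemma cot_le {θ y : ℝ} (h1 : -(Real.pi/2) < θ) (hθ2 : θ < 0) (hy1 : θ ≤ y) (hy2 : y ≤ 0) :
    Real.cot (2*y) ≤ 1/(-Real.sin (2*θ)) := by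
  have hπ := Real.pi_pos
  have hs2θ : Real.sin (2*θ) < 0 := Real.sin_neg_of_neg_of_neg_pi_lt (by linarith) (by linarith)
  have hns : (0:ℝ) < -Real.sin (2*θ) := by linarith
  have hpos : (0:ℝ) < 1/(-Real.sin (2*θ)) := by positivity
  rcases eq_or_lt_of_le hy2 with rfl | hy2'
  · simp only [mul_zero, Real.cot_eq_cos_div_sin, Real.sin_zero, div_zero]
    exact hpos.le
  have hs2y : Real.sin (2*y) < 0 := Real.sin_neg_of_neg_of_neg_pi_lt (by linarith) (by linarith)
  rw [Real.cot_eq_cos_div_sin]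
  rcases le_or_gt (Real.cos (2*y)) 0 with hc | hc
  · -- 2y ∈ (-π, -π/2], sin decreasing there
    have h2y : 2*y ≤ -(Real.pi/2) := by
      by_contra h
      push_neg at h
      exact (Real.cos_pos_of_mem_Ioo ⟨h, by linarith⟩).not_ge hc
    have hmono : Real.sin (2*y) ≤ Real.sin (2*θ) := by
      have e1 : Real.sin (2*y) = -Real.sin (2*y + Real.pi) := by
        rw [Real.sin_add_pi]; ring
      have e2 : Real.sin (2*θ) = -Real.sin (2*θ + Real.pi) := by
        rw [Real.sin_add_pi]; ring
      rw [e1, e2, neg_le_neg_iff]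
      apply Real.strictMonoOn_sin.monotoneOn ⟨by linarith, by linarith⟩
        ⟨by linarith, by linarith⟩ (by linarith)
    have hby : 0 < -Real.sin (2*y) := by linarith
    have : Real.cos (2*y) / Real.sin (2*y) = (-Real.cos (2*y)) / (-Real.sin (2*y)) := by
      rw [neg_div_neg_eq]
    rw [this]
    have h1' : -Real.cos (2*y) ≤ 1 := by nlinarith [Real.neg_one_le_cos (2*y)]
    calc (-Real.cos (2*y)) / (-Real.sin (2*y)) ≤ 1 / (-Real.sin (2*y)) := by
          exact (div_le_div_iff_of_pos_right hby).mpr h1'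
      _ ≤ 1/(-Real.sin (2*θ)) := by
          apply one_div_le_one_div_of_le (by linarith) (by linarith)
  · exact le_trans (le_of_lt (div_neg_of_pos_of_neg hc hs2y)) hpos.le

lemma cot_fun_eq : (Real.cot : ℝ → ℝ) = fun x => Real.cos x / Real.sin x := by
  funext x; exact Real.cot_eq_cos_div_sin x

lemma measurable_cot : Measurable (Real.cot : ℝ → ℝ) := by
  rw [cot_fun_eq]; exact Real.measurable_cos.div Real.measurable_sin

lemma measurable_f0 (lam : ℝ) : Measurable (f0 lam) := by
  apply Measurable.div
  · exact (Real.measurable_exp.comp ((measurable_cot.comp (measurable_const.mul measurable_id)).const_mul (2*lam))).comp measurable_id |>.mono le_rfl le_rfl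
  · exact (Real.measurable_cos.pow measurable_const)

lemma measurable_f1 (lam : ℝ) : Measurable (f1 lam) := by
  apply Measurable.mul
  · exact Real.measurable_exp.comp ((measurable_cot.comp (measurable_const.mul measurable_id)).const_mul (2*lam))
  · exact Real.measurable_sin.comp (measurable_const.mul measurable_id)

lemma cos_ge {y : ℝ} (h1 : -(Real.pi/2) < θ) (hθ2 : θ < 0) (hy1 : θ ≤ y) (hy2 : y ≤ 0) :
    Real.cos θ ≤ Real.cos y := by
  have := Real.pi_pos
  have : Real.cos (-y) ≥ Real.cos (-θ) := by
    apply Real.cos_le_cos_of_nonneg_of_le_pi (by linarith) (by linarith) (by linarith)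
  simpa [Real.cos_neg] using this

lemma Ef_le (hlam : 0 ≤ lam) (h1 : -(Real.pi/2) < θ) (hθ2 : θ < 0) {y : ℝ}
    (hy1 : θ ≤ y) (hy2 : y ≤ 0) :
    Ef lam y ≤ Real.exp (2*lam/(-Real.sin (2*θ))) := by
  apply Real.exp_le_exp.mpr
  have h := cot_le h1 hθ2 hy1 hy2
  calc 2*lam*Real.cot (2*y) ≤ 2*lam*(1/(-Real.sin (2*θ))) := by
        apply mul_le_mul_of_nonneg_left h (by linarith)
    _ = 2*lam/(-Real.sin (2*θ)) := by ring

lemma f0_nonneg (lam y : ℝ) : 0 ≤ f0 lam y :=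
  div_nonneg (Real.exp_pos _).le (sq_nonneg _)

lemma integrableOn_f0 (hlam : 0 ≤ lam) (h1 : -(Real.pi/2) < θ) (hθ2 : θ < 0) :
    IntegrableOn (f0 lam) (Icc θ 0) volume := by
  have hc : 0 < Real.cos θ := Real.cos_pos_of_mem_Ioo ⟨by linarith, by linarith [Real.pi_pos]⟩
  apply Measure.integrableOn_of_bounded (measure_Icc_lt_top).ne
    (measurable_f0 lam).aestronglyMeasurable
  · rw [ae_restrict_iff' measurableSet_Icc]
    refine ae_of_all _ (fun y hy => ?_)
    rw [Real.norm_eq_abs, abs_of_nonneg (f0_nonneg lam y)]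
    show Real.exp (2 * lam * Real.cot (2 * y)) / Real.cos y ^ 2
        ≤ Real.exp (2*lam/(-Real.sin (2*θ))) / Real.cos θ ^ 2
    apply div_le_div₀ (Real.exp_pos _).le (Ef_le hlam h1 hθ2 hy.1 hy.2) (by positivity)
    exact pow_le_pow_left₀ hc.le (cos_ge h1 hθ2 hy.1 hy.2) 2

lemma integrableOn_f1 (hlam : 0 ≤ lam) (h1 : -(Real.pi/2) < θ) (hθ2 : θ < 0) :
    IntegrableOn (f1 lam) (Icc θ 0) volume := by
  apply Measure.integrableOn_of_bounded (measure_Icc_lt_top).ne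
    (measurable_f1 lam).aestronglyMeasurable
  · rw [ae_restrict_iff' measurableSet_Icc]
    refine ae_of_all _ (fun y hy => ?_)
    show ‖Real.exp (2 * lam * Real.cot (2 * y)) * Real.sin (2 * y)‖
        ≤ Real.exp (2*lam/(-Real.sin (2*θ)))
    rw [Real.norm_eq_abs, abs_mul, Real.abs_exp]
    calc Real.exp (2 * lam * Real.cot (2 * y)) * |Real.sin (2*y)|
        ≤ Real.exp (2*lam/(-Real.sin (2*θ))) * 1 := by
          apply mul_le_mul (Ef_le hlam h1 hθ2 hy.1 hy.2) (Real.abs_sin_le_one _)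
            (abs_nonneg _) (Real.exp_pos _).le
      _ = Real.exp (2*lam/(-Real.sin (2*θ))) := mul_one _

lemma intInt_f0 (hlam : 0 ≤ lam) (h1 : -(Real.pi/2) < θ) (hθ2 : θ < 0) :
    IntervalIntegrable (f0 lam) volume θ 0 := by
  apply IntegrableOn.intervalIntegrable
  rw [uIcc_of_le hθ2.le]
  exact integrableOn_f0 hlam h1 hθ2

lemma intInt_f1 (hlam : 0 ≤ lam) (h1 : -(Real.pi/2) < θ) (hθ2 : θ < 0) :
    IntervalIntegrable (f1 lam) volume θ 0 := by
  apply IntegrableOn.intervalIntegrable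
  rw [uIcc_of_le hθ2.le]
  exact integrableOn_f1 hlam h1 hθ2

lemma hasDeriv_Phi {t : ℝ} (h1 : -(Real.pi/2) < t) (h2 : t < 0) :
    HasDerivAt (fun t => Ef lam t * Real.sin t ^ 2)
      (Ef lam t * (Real.sin (2*t) - lam / Real.cos t ^ 2)) t := by
  have hπ := Real.pi_pos
  have hs : Real.sin t ≠ 0 := (Real.sin_neg_of_neg_of_neg_pi_lt h2 (by linarith)).ne
  have hc : Real.cos t ≠ 0 :=
    (Real.cos_pos_of_mem_Ioo ⟨by linarith, by linarith⟩).ne'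
  have hs2 : Real.sin (2*t) ≠ 0 :=
    (Real.sin_neg_of_neg_of_neg_pi_lt (by linarith) (by linarith)).ne
  have hfun : (fun t => Ef lam t * Real.sin t ^ 2)
      = fun t => Real.exp (2 * lam * (Real.cos (2*t) / Real.sin (2*t))) * Real.sin t ^ 2 := by
    funext x; rw [Ef, Real.cot_eq_cos_div_sin]
  rw [hfun]
  have h2t : HasDerivAt (fun t : ℝ => 2*t) 2 t := by
    simpa using (hasDerivAt_id t).const_mul 2
  have hcos2 : HasDerivAt (fun t : ℝ => Real.cos (2*t)) (-Real.sin (2*t) * 2) t :=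
    (Real.hasDerivAt_cos (2*t)).comp t h2t
  have hsin2 : HasDerivAt (fun t : ℝ => Real.sin (2*t)) (Real.cos (2*t) * 2) t :=
    (Real.hasDerivAt_sin (2*t)).comp t h2t
  have hquot := hcos2.div hsin2 hs2
  have hu := hquot.const_mul (2*lam)
  have hexp := hu.exp
  have hsinsq : HasDerivAt (fun t : ℝ => Real.sin t ^ 2)
      ((2:ℕ) * Real.sin t ^ 1 * Real.cos t) t := (Real.hasDerivAt_sin t).pow 2
  have hmul := hexp.mul hsinsq
  refine hmul.congr_deriv ?_
  symm
  simp only [Pi.div_apply]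
  rw [Ef, Real.cot_eq_cos_div_sin]
  have h12 := Real.sin_sq_add_cos_sq (2*t)
  have e1 : -Real.sin (2*t)*2*Real.sin (2*t) - Real.cos (2*t)*(Real.cos (2*t)*2) = -2 := by
    linear_combination (-2)*h12
  rw [e1, Real.sin_two_mul]
  field_simp
  ring

lemma step_a (hlam : 0 ≤ lam) (h1 : -(Real.pi/2) < θ) (hθ2 : θ < 0) {c : ℝ}
    (hc : c ∈ Ioo θ (0:ℝ)) :
    lam * (∫ y in θ..c, f0 lam y) - (∫ y in θ..c, f1 lam y)
      = Ef lam θ * Real.sin θ ^ 2 - Ef lam c * Real.sin c ^ 2 := by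
  have hmemc : c ∈ uIcc θ (0:ℝ) := by
    rw [uIcc_of_le hθ2.le]; exact ⟨hc.1.le, hc.2.le⟩
  have hsub : uIcc θ c ⊆ uIcc θ 0 := uIcc_subset_uIcc left_mem_uIcc hmemc
  have hi0 : IntervalIntegrable (f0 lam) volume θ c := (intInt_f0 hlam h1 hθ2).mono_set hsub
  have hi1 : IntervalIntegrable (f1 lam) volume θ c := (intInt_f1 hlam h1 hθ2).mono_set hsub
  have hderiv : ∀ x ∈ uIcc θ c, HasDerivAt (fun t => -(Ef lam t * Real.sin t ^ 2))
      (lam * f0 lam x - f1 lam x) x := by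
    intro x hx
    rw [uIcc_of_le hc.1.le] at hx
    have hd := (hasDeriv_Phi (lam := lam) (t := x) (by linarith [hx.1]) (by linarith [hx.2, hc.2])).neg
    refine hd.congr_deriv ?_
    simp only [f0, f1, Ef]
    ring
  have hint : IntervalIntegrable (fun y => lam * f0 lam y - f1 lam y) volume θ c :=
    (hi0.const_mul lam).sub hi1
  have key := intervalIntegral.integral_eq_sub_of_hasDerivAt hderiv hint
  rw [intervalIntegral.integral_sub (hi0.const_mul lam) hi1,
    intervalIntegral.integral_const_mul] at key
  rw [key]; ring

lemma key_identity (hlam : 0 ≤ lam) (h1 : -(Real.pi/2) < θ) (hθ2 : θ < 0) :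
    lam * (∫ y in θ..0, f0 lam y)
      = Ef lam θ * Real.sin θ ^ 2 + ∫ y in θ..0, f1 lam y := by
  have hπ := Real.pi_pos
  set l := nhdsWithin (0:ℝ) (Ioo θ 0) with hl
  haveI hne : l.NeBot := by
    rw [hl]
    apply mem_closure_iff_nhdsWithin_neBot.mp
    rw [closure_Ioo hθ2.ne]
    exact ⟨hθ2.le, le_refl 0⟩
  have h0mem : (0:ℝ) ∈ uIcc θ 0 := right_mem_uIcc
  have hIccIoo : Ioo θ (0:ℝ) ⊆ uIcc θ 0 := by
    rw [uIcc_of_le hθ2.le]; exact Ioo_subset_Icc_self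
  have t0 : Tendsto (fun c => ∫ y in θ..c, f0 lam y) l (𝓝 (∫ y in θ..0, f0 lam y)) :=
    ((intervalIntegral.continuousOn_primitive_interval' (intInt_f0 hlam h1 hθ2)
      left_mem_uIcc) 0 h0mem).mono hIccIoo
  have t1 : Tendsto (fun c => ∫ y in θ..c, f1 lam y) l (𝓝 (∫ y in θ..0, f1 lam y)) :=
    ((intervalIntegral.continuousOn_primitive_interval' (intInt_f1 hlam h1 hθ2)
      left_mem_uIcc) 0 h0mem).mono hIccIoo
  have tΦ : Tendsto (fun c => Ef lam c * Real.sin c ^ 2) l (𝓝 0) := by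
    apply squeeze_zero' (g := fun c => Real.sin c ^ 2)
      (Eventually.of_forall fun c => mul_nonneg (Real.exp_pos _).le (sq_nonneg _))
    · have hev1 : ∀ᶠ c in l, -(Real.pi/4) < c := by
        apply eventually_nhdsWithin_of_eventually_nhds
        exact eventually_gt_nhds (by linarith)
      have hev2 : ∀ᶠ c in l, c ∈ Ioo θ (0:ℝ) := eventually_mem_nhdsWithin
      filter_upwards [hev1, hev2] with c hc1 hc2
      have hcos : 0 < Real.cos (2*c) := Real.cos_pos_of_mem_Ioo ⟨by linarith [hc2.2], by linarith [hc2.2]⟩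
      have hsin : Real.sin (2*c) < 0 :=
        Real.sin_neg_of_neg_of_neg_pi_lt (by linarith [hc2.2]) (by linarith [hc1])
      have hE : Ef lam c ≤ 1 := by
        rw [Ef]
        apply Real.exp_le_one_iff.mpr
        have : Real.cot (2*c) ≤ 0 := by
          rw [Real.cot_eq_cos_div_sin]
          exact div_nonpos_of_nonneg_of_nonpos hcos.le hsin.le
        nlinarith
      exact mul_le_of_le_one_left (sq_nonneg _) hE
    · have : Tendsto (fun c : ℝ => Real.sin c ^ 2) (𝓝 0) (𝓝 (Real.sin 0 ^ 2)) :=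
        (Real.continuous_sin.pow 2).tendsto 0
      simpa using this.mono_left nhdsWithin_le_nhds
  have heq : ∀ᶠ c in l,
      lam * (∫ y in θ..c, f0 lam y) - (∫ y in θ..c, f1 lam y) + Ef lam c * Real.sin c ^ 2
        = Ef lam θ * Real.sin θ ^ 2 := by
    filter_upwards [eventually_mem_nhdsWithin] with c hc
    have := step_a hlam h1 hθ2 hc
    linarith
  have Tl : Tendsto (fun c =>
      lam * (∫ y in θ..c, f0 lam y) - (∫ y in θ..c, f1 lam y) + Ef lam c * Real.sin c ^ 2) l
      (𝓝 (lam * (∫ y in θ..0, f0 lam y) - (∫ y in θ..0, f1 lam y) + 0)) :=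
    ((t0.const_mul lam).sub t1).add tΦ
  have Tc : Tendsto (fun _ : ℝ => Ef lam θ * Real.sin θ ^ 2) l
      (𝓝 (Ef lam θ * Real.sin θ ^ 2)) := tendsto_const_nhds
  have := tendsto_nhds_unique (Tl.congr' heq) Tc
  linarith
lemma BE_one : Bf lam θ * Ef lam θ = 1 := by
  rw [Bf, Ef, ← Real.exp_add]
  rw [show -2*lam*Real.cot (2*θ) + 2*lam*Real.cot (2*θ) = 0 by ring, Real.exp_zero]

lemma lamH (hlam : 0 ≤ lam) (h1 : -(Real.pi/2) < θ) (hθ2 : θ < 0) :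
    lam * Hfun lam θ = Real.sin θ ^ 2 + Bf lam θ * I1 lam θ := by
  have hk := key_identity hlam h1 hθ2
  have hb := BE_one (lam := lam) (θ := θ)
  rw [Hfun]
  have : lam * (Bf lam θ * ∫ y in θ..0, f0 lam y)
      = Bf lam θ * (lam * ∫ y in θ..0, f0 lam y) := by ring
  rw [show (∫ y in θ..0, Real.exp (2 * lam * Real.cot (2 * y)) / Real.cos y ^ 2)
      = ∫ y in θ..0, f0 lam y from rfl]
  rw [show Real.exp (-2 * lam * Real.cot (2 * θ)) = Bf lam θ from rfl]
  rw [this, hk]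
  rw [I1]
  nlinarith [hb]

lemma pointwise_formula (hlam : 0 ≤ lam) (h1 : -(Real.pi/2) < θ) (hθ2 : θ < 0) :
    (p0t lam θ - p1t lam θ) * Real.cos θ * Real.sin θ
      = Bf lam θ * I1 lam θ / (Real.sin θ * Real.cos θ) := by
  have hπ := Real.pi_pos
  have hS : Real.sin θ ≠ 0 := (Real.sin_neg_of_neg_of_neg_pi_lt hθ2 (by linarith)).ne
  have hC : Real.cos θ ≠ 0 := (Real.cos_pos_of_mem_Ioo ⟨by linarith, by linarith⟩).ne'
  have hpy := Real.sin_sq_add_cos_sq θ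
  have hlh := lamH hlam h1 hθ2
  rw [p0t, p1t]
  have e1 : lam * (1 / Real.sin θ ^ 2) * Hfun lam θ
      = (Real.sin θ^2 + Bf lam θ * I1 lam θ) / Real.sin θ ^ 2 := by
    rw [mul_comm lam, mul_assoc, hlh]; ring
  rw [e1, hlh]
  field_simp
  ring_nf
  linear_combination (Real.sin θ^2 + Bf lam θ * I1 lam θ) * hpy

lemma I1_neg (hlam : 0 ≤ lam) (h1 : -(Real.pi/2) < θ) (hθ2 : θ < 0) : I1 lam θ < 0 := by
  have hπ := Real.pi_pos
  have hpos : 0 < ∫ y in θ..0, -f1 lam y := by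
    apply intervalIntegral.intervalIntegral_pos_of_pos_on ((intInt_f1 hlam h1 hθ2).neg)
    · intro y hy
      have hs : Real.sin (2*y) < 0 :=
        Real.sin_neg_of_neg_of_neg_pi_lt (by linarith [hy.2]) (by linarith [hy.1])
      have : f1 lam y < 0 := mul_neg_of_pos_of_neg (Real.exp_pos _) hs
      simpa [f1] using this
    · exact hθ2
  rw [intervalIntegral.integral_neg] at hpos
  rw [I1]; linarith

lemma pointwise_pos (hlam : 0 ≤ lam) (h1 : -(Real.pi/2) < θ) (hθ2 : θ < 0) :
    0 < (p0t lam θ - p1t lam θ) * Real.cos θ * Real.sin θ := by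
  have hπ := Real.pi_pos
  rw [pointwise_formula hlam h1 hθ2]
  have hnum : Bf lam θ * I1 lam θ < 0 :=
    mul_neg_of_pos_of_neg (Real.exp_pos _) (I1_neg hlam h1 hθ2)
  have hden : Real.sin θ * Real.cos θ < 0 :=
    mul_neg_of_neg_of_pos (Real.sin_neg_of_neg_of_neg_pi_lt hθ2 (by linarith))
      (Real.cos_pos_of_mem_Ioo ⟨by linarith, by linarith⟩)
  exact div_pos_of_neg_of_neg hnum hden

lemma f0_nonneg' (lam y : ℝ) : 0 ≤ f0 lam y := div_nonneg (Real.exp_pos _).le (sq_nonneg _)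

lemma negBI1_le (hlam : 0 ≤ lam) (h1 : -(Real.pi/2) < θ) (hθ2 : θ < 0) :
    -(Bf lam θ * I1 lam θ) ≤ Real.sin θ ^ 2 := by
  have h0 : 0 ≤ ∫ y in θ..0, f0 lam y :=
    intervalIntegral.integral_nonneg hθ2.le (fun u _ => f0_nonneg' lam u)
  have hH : 0 ≤ lam * Hfun lam θ := by
    rw [Hfun]
    positivity
  have := lamH hlam h1 hθ2
  linarith

lemma bound_region1 (hlam : 0 ≤ lam) (h1 : -(Real.pi/4) ≤ θ) (hθ2 : θ < 0) :
    (p0t lam θ - p1t lam θ) * Real.cos θ * Real.sin θ ≤ 1 := by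
  have hπ := Real.pi_pos
  have h1' : -(Real.pi/2) < θ := by linarith
  have hSneg : Real.sin θ < 0 := Real.sin_neg_of_neg_of_neg_pi_lt hθ2 (by linarith)
  have hC : 0 < Real.cos θ := Real.cos_pos_of_mem_Ioo ⟨by linarith, by linarith⟩
  rw [pointwise_formula hlam h1' hθ2]
  have heq : Bf lam θ * I1 lam θ / (Real.sin θ * Real.cos θ)
      = (-(Bf lam θ * I1 lam θ)) / ((-Real.sin θ) * Real.cos θ) := by
    rw [div_eq_div_iff (by nlinarith) (by nlinarith)]
    ring
  rw [heq]
  have hSC : -Real.sin θ ≤ Real.cos θ := by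
    have hcs : Real.cos θ = Real.sin (θ + Real.pi/2) := by
      rw [Real.sin_add_pi_div_two]
    rw [hcs, show -Real.sin θ = Real.sin (-θ) by rw [Real.sin_neg]]
    apply Real.strictMonoOn_sin.monotoneOn ⟨by linarith, by linarith⟩
      ⟨by linarith, by linarith⟩ (by linarith)
  have hnum : -(Bf lam θ * I1 lam θ) ≤ (-Real.sin θ) * Real.cos θ := by
    have := negBI1_le hlam h1' hθ2
    nlinarith [hSneg]
  rw [div_le_one (by nlinarith)]
  exact hnum

lemma exp_neg_le {t : ℝ} (ht : 0 < t) : Real.exp (-t) ≤ 4/t^2 := by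
  have h1 : t/2 ≤ Real.exp (t/2) := by
    have := Real.add_one_le_exp (t/2)
    linarith
  have h2 : (t/2)^2 ≤ Real.exp (t/2)^2 := by
    apply pow_le_pow_left₀ (by linarith) h1
  have h3 : Real.exp (t/2)^2 = Real.exp t := by
    rw [pow_two, ← Real.exp_add]; congr 1; ring
  rw [h3] at h2
  have h4 : (0:ℝ) < (t/2)^2 := by positivity
  rw [Real.exp_neg]
  calc (Real.exp t)⁻¹ ≤ ((t/2)^2)⁻¹ := by
        apply inv_anti₀ h4 h2
    _ = 4/t^2 := by field_simp; ring

-- the integrand bound on an individual point y of (θ, 0), general form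
lemma hBfE (y : ℝ) : Bf lam θ * -(f1 lam y)
    = Real.exp (2*lam*Real.cot (2*y) - 2*lam*Real.cot (2*θ)) * (-Real.sin (2*y)) := by
  rw [Bf, f1]
  rw [show Real.exp (-2*lam*Real.cot (2*θ)) * -(Real.exp (2*lam*Real.cot (2*y)) * Real.sin (2*y))
      = (Real.exp (-2*lam*Real.cot (2*θ)) * Real.exp (2*lam*Real.cot (2*y))) * (-Real.sin (2*y))
    from by ring, ← Real.exp_add]
  congr 1
  ring

lemma numerator_bound (hlam : 0 < lam) (h1 : -(Real.pi/2) < θ) (hθ2 : θ ≤ -(Real.pi/4)) :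
    -(Bf lam θ * I1 lam θ) ≤ (4 + 8*Real.pi/lam^2) * (θ + Real.pi/2)^2 := by
  have hπ := Real.pi_pos
  set ε := θ + Real.pi/2 with hε
  have hε0 : 0 < ε := by rw [hε]; linarith
  have hε4 : ε ≤ Real.pi/4 := by rw [hε]; linarith
  have hθ0 : θ < 0 := by linarith
  set y₀ := 2*θ + Real.pi/2 with hy₀
  have hθy₀ : θ < y₀ := by rw [hy₀]; linarith
  have hy₀0 : y₀ ≤ 0 := by rw [hy₀]; linarith
  -- rewrite as an integral
  have hIf : IntervalIntegrable (fun y => Bf lam θ * -(f1 lam y)) volume θ 0 :=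
    ((intInt_f1 hlam.le h1 hθ0).neg).const_mul _
  have hrw : -(Bf lam θ * I1 lam θ) = ∫ y in θ..0, Bf lam θ * -(f1 lam y) := by
    rw [I1, intervalIntegral.integral_const_mul, intervalIntegral.integral_neg]
    ring
  have hsub1 : IntervalIntegrable (fun y => Bf lam θ * -(f1 lam y)) volume θ y₀ := by
    apply hIf.mono_set
    apply uIcc_subset_uIcc left_mem_uIcc
    rw [uIcc_of_le hθ0.le]; exact ⟨hθy₀.le, hy₀0⟩
  have hsub2 : IntervalIntegrable (fun y => Bf lam θ * -(f1 lam y)) volume y₀ 0 := by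
    apply hIf.mono_set
    apply uIcc_subset_uIcc _ right_mem_uIcc
    rw [uIcc_of_le hθ0.le]; exact ⟨hθy₀.le, hy₀0⟩
  have hsplit : (∫ y in θ..0, Bf lam θ * -(f1 lam y))
      = (∫ y in θ..y₀, Bf lam θ * -(f1 lam y)) + ∫ y in y₀..0, Bf lam θ * -(f1 lam y) :=
    (intervalIntegral.integral_add_adjacent_intervals hsub1 hsub2).symm
  -- pointwise nonneg / bounds
  have hbnd1 : ∀ y ∈ Set.uIoc θ y₀, ‖Bf lam θ * -(f1 lam y)‖ ≤ 4*ε := by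
    intro y hy
    rw [uIoc_of_le hθy₀.le] at hy
    rcases eq_or_lt_of_le (hy.2.trans hy₀0) with rfl | hylt
    · simp [f1]
      positivity
    have hsin : Real.sin (2*y) < 0 :=
      Real.sin_neg_of_neg_of_neg_pi_lt (by linarith) (by linarith [hy.1])
    rw [hBfE, Real.norm_eq_abs, abs_of_nonneg (mul_nonneg (Real.exp_pos _).le
      (by linarith : (0:ℝ) ≤ -Real.sin (2*y)))]
    have hcot := key_cot h1 hy.1.le hylt
    have hmono : (0:ℝ) ≤ 1/(2*θ + Real.pi) - 1/(2*y + Real.pi) := by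
      have : 1/(2*y + Real.pi) ≤ 1/(2*θ + Real.pi) :=
        one_div_le_one_div_of_le (by linarith) (by linarith [hy.1])
      linarith
    have he : Real.exp (2*lam*Real.cot (2*y) - 2*lam*Real.cot (2*θ)) ≤ 1 := by
      apply Real.exp_le_one_iff.mpr
      nlinarith
    have hsb : -Real.sin (2*y) ≤ 4*ε := by
      have e1 : -Real.sin (2*y) = Real.sin (2*y + Real.pi) := by
        rw [Real.sin_add_pi]
      rw [e1]
      calc Real.sin (2*y + Real.pi) ≤ 2*y + Real.pi := Real.sin_le (by linarith [hy.1])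
        _ ≤ 2*y₀ + Real.pi := by linarith [hy.2]
        _ = 4*ε := by rw [hy₀, hε]; ring
    calc Real.exp (2*lam*Real.cot (2*y) - 2*lam*Real.cot (2*θ)) * (-Real.sin (2*y))
        ≤ 1 * (4*ε) := mul_le_mul he hsb (by linarith) zero_le_one
      _ = 4*ε := one_mul _
  have hbnd2 : ∀ y ∈ Set.uIoc y₀ 0, ‖Bf lam θ * -(f1 lam y)‖ ≤ 16*ε^2/lam^2 := by
    intro y hy
    rw [uIoc_of_le hy₀0] at hy
    rcases eq_or_lt_of_le hy.2 with rfl | hylt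
    · simp [f1]
      positivity
    have hsin : Real.sin (2*y) < 0 :=
      Real.sin_neg_of_neg_of_neg_pi_lt (by linarith) (by linarith [hy.1, hθy₀])
    rw [hBfE, Real.norm_eq_abs, abs_of_nonneg (mul_nonneg (Real.exp_pos _).le
      (by linarith : (0:ℝ) ≤ -Real.sin (2*y)))]
    have hcot := key_cot h1 (by linarith [hy.1] : θ ≤ y) hylt
    have hden : 1/(2*θ + Real.pi) - 1/(2*y + Real.pi) ≥ 1/(4*ε) := by
      have h2θ : 2*θ + Real.pi = 2*ε := by rw [hε]; ring
      have hyδ : 2*y + Real.pi ≥ 4*ε := by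
        have : y ≥ y₀ := hy.1.le
        rw [hy₀] at this; rw [hε]; linarith
      have : 1/(2*y + Real.pi) ≤ 1/(4*ε) := one_div_le_one_div_of_le (by positivity) hyδ
      rw [h2θ]
      have h24 : 1/(2*ε) - 1/(4*ε) = 1/(4*ε) := by field_simp; ring
      linarith
    have he : Real.exp (2*lam*Real.cot (2*y) - 2*lam*Real.cot (2*θ)) ≤ 16*ε^2/lam^2 := by
      have harg : 2*lam*Real.cot (2*y) - 2*lam*Real.cot (2*θ) ≤ -(lam/(2*ε)) := by
        have h2 : 2*lam*(Real.cot (2*θ) - Real.cot (2*y)) ≥ 2*lam*(1/(4*ε)) := by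
          apply mul_le_mul_of_nonneg_left (by linarith) (by linarith)
        have h3 : 2*lam*(1/(4*ε)) = lam/(2*ε) := by field_simp; ring
        nlinarith
      calc Real.exp (2*lam*Real.cot (2*y) - 2*lam*Real.cot (2*θ))
          ≤ Real.exp (-(lam/(2*ε))) := Real.exp_le_exp.mpr harg
        _ ≤ 4/(lam/(2*ε))^2 := exp_neg_le (by positivity)
        _ = 16*ε^2/lam^2 := by field_simp; ring
    have hsb : -Real.sin (2*y) ≤ 1 := by
      have := Real.neg_one_le_sin (2*y)
      linarith
    calc Real.exp (2*lam*Real.cot (2*y) - 2*lam*Real.cot (2*θ)) * (-Real.sin (2*y))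
        ≤ (16*ε^2/lam^2) * 1 := by
          apply mul_le_mul he hsb (by linarith) (by positivity)
      _ = 16*ε^2/lam^2 := mul_one _
  have hp1 : (∫ y in θ..y₀, Bf lam θ * -(f1 lam y)) ≤ 4*ε*ε := by
    have := intervalIntegral.norm_integral_le_of_norm_le_const hbnd1
    rw [Real.norm_eq_abs] at this
    have habs : |y₀ - θ| = ε := by
      rw [abs_of_pos (by linarith), hy₀, hε]; ring
    rw [habs] at this
    calc (∫ y in θ..y₀, Bf lam θ * -(f1 lam y)) ≤ |∫ y in θ..y₀, Bf lam θ * -(f1 lam y)| :=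
          le_abs_self _
      _ ≤ 4*ε*ε := this
  have hp2 : (∫ y in y₀..0, Bf lam θ * -(f1 lam y)) ≤ (16*ε^2/lam^2)*(Real.pi/2) := by
    have := intervalIntegral.norm_integral_le_of_norm_le_const hbnd2
    rw [Real.norm_eq_abs] at this
    have habs : |(0:ℝ) - y₀| ≤ Real.pi/2 := by
      rw [abs_of_nonneg (by linarith)]
      rw [hy₀]; linarith
    have h16 : (0:ℝ) ≤ 16*ε^2/lam^2 := by positivity
    calc (∫ y in y₀..0, Bf lam θ * -(f1 lam y)) ≤ |∫ y in y₀..0, Bf lam θ * -(f1 lam y)| :=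
          le_abs_self _
      _ ≤ (16*ε^2/lam^2) * |(0:ℝ) - y₀| := this
      _ ≤ (16*ε^2/lam^2) * (Real.pi/2) := by
          apply mul_le_mul_of_nonneg_left habs h16
  rw [hrw, hsplit]
  have final : 4*ε*ε + (16*ε^2/lam^2)*(Real.pi/2) = (4 + 8*Real.pi/lam^2)*ε^2 := by
    field_simp; ring
  exact le_trans (add_le_add hp1 hp2) (le_of_eq final)

lemma bound_region2 (hlam : 0 < lam) (h1 : -(Real.pi/2) < θ) (hθ2 : θ ≤ -(Real.pi/4)) :
    (p0t lam θ - p1t lam θ) * Real.cos θ * Real.sin θ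
      ≤ (4 + 8*Real.pi/lam^2) * Real.pi^2 / 4 := by
  have hπ := Real.pi_pos
  have hθ0 : θ < 0 := by linarith
  set ε := θ + Real.pi/2 with hε
  have hε0 : 0 < ε := by rw [hε]; linarith
  have hε4 : ε ≤ Real.pi/4 := by rw [hε]; linarith
  have hSneg : Real.sin θ < 0 := Real.sin_neg_of_neg_of_neg_pi_lt hθ0 (by linarith)
  have hC : 0 < Real.cos θ := Real.cos_pos_of_mem_Ioo ⟨by linarith, by linarith⟩
  rw [pointwise_formula hlam.le h1 hθ0]
  have heq : Bf lam θ * I1 lam θ / (Real.sin θ * Real.cos θ)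
      = (-(Bf lam θ * I1 lam θ)) / ((-Real.sin θ) * Real.cos θ) := by
    rw [div_eq_div_iff (by nlinarith) (by nlinarith)]
    ring
  rw [heq]
  have hS12 : (1:ℝ)/2 ≤ -Real.sin θ := by
    have := Real.mul_le_sin (x := -θ) (by linarith) (by linarith)
    rw [Real.sin_neg] at this
    have h2π : 2/Real.pi * (Real.pi/4) ≤ 2/Real.pi * (-θ) := by
      apply mul_le_mul_of_nonneg_left (by linarith) (by positivity)
    have he : 2/Real.pi * (Real.pi/4) = 1/2 := by field_simp; norm_num
    linarith [he ▸ h2π]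
  have hCε : 2/Real.pi * ε ≤ Real.cos θ := by
    have hms := Real.mul_le_sin (x := θ + Real.pi/2) (by linarith) (by linarith)
    rw [Real.sin_add_pi_div_two] at hms
    rw [hε]
    exact hms
  have hD : ε/Real.pi ≤ (-Real.sin θ) * Real.cos θ := by
    have h2 : (0:ℝ) ≤ 2/Real.pi * ε := by positivity
    calc ε/Real.pi = (1/2) * (2/Real.pi * ε) := by field_simp
      _ ≤ (-Real.sin θ) * (2/Real.pi * ε) := by
          apply mul_le_mul_of_nonneg_right hS12 h2
      _ ≤ (-Real.sin θ) * Real.cos θ := by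
          apply mul_le_mul_of_nonneg_left hCε (by linarith)
  have hnum0 : 0 ≤ -(Bf lam θ * I1 lam θ) := by
    have := mul_neg_of_pos_of_neg (Real.exp_pos (-2*lam*Real.cot (2*θ))) (I1_neg hlam.le h1 hθ0)
    rw [Bf]
    linarith [this]
  have hnb := numerator_bound hlam h1 hθ2
  calc -(Bf lam θ * I1 lam θ) / ((-Real.sin θ) * Real.cos θ)
      ≤ -(Bf lam θ * I1 lam θ) / (ε/Real.pi) := by
        apply div_le_div_of_nonneg_left hnum0 (by positivity) hD
    _ ≤ ((4 + 8*Real.pi/lam^2) * ε^2) / (ε/Real.pi) :=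
        (div_le_div_iff_of_pos_right (by positivity)).mpr hnb
    _ = (4 + 8*Real.pi/lam^2) * Real.pi * ε := by
        field_simp
    _ ≤ (4 + 8*Real.pi/lam^2) * Real.pi^2 / 4 := by
        have hc : (0:ℝ) ≤ (4 + 8*Real.pi/lam^2) * Real.pi := by positivity
        calc (4 + 8*Real.pi/lam^2) * Real.pi * ε ≤ (4 + 8*Real.pi/lam^2) * Real.pi * (Real.pi/4) := by
              apply mul_le_mul_of_nonneg_left hε4 hc
          _ = (4 + 8*Real.pi/lam^2) * Real.pi^2 / 4 := by ring

lemma pointwise_le (hlam : 0 < lam) (h1 : -(Real.pi/2) < θ) (hθ2 : θ < 0) :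
    (p0t lam θ - p1t lam θ) * Real.cos θ * Real.sin θ
      ≤ 1 + (4 + 8*Real.pi/lam^2) * Real.pi^2 / 4 := by
  have hπ := Real.pi_pos
  have hM2 : (0:ℝ) ≤ (4 + 8*Real.pi/lam^2) * Real.pi^2 / 4 := by positivity
  rcases le_or_gt (-(Real.pi/4)) θ with hc | hc
  · linarith [bound_region1 hlam.le hc hθ2]
  · linarith [bound_region2 hlam h1 hc.le]

lemma contOn (hlam : 0 < lam) :
    ContinuousOn (fun θ => (p0t lam θ - p1t lam θ) * Real.cos θ * Real.sin θ)
      (Ioo (-(Real.pi/2)) (0:ℝ)) := by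
  have hπ := Real.pi_pos
  intro θ₀ hθ₀
  apply ContinuousAt.continuousWithinAt
  obtain ⟨hθ₁, hθ₂⟩ := hθ₀
  have hS : Real.sin θ₀ ≠ 0 := (Real.sin_neg_of_neg_of_neg_pi_lt hθ₂ (by linarith)).ne
  have hC : Real.cos θ₀ ≠ 0 := (Real.cos_pos_of_mem_Ioo ⟨by linarith, by linarith⟩).ne'
  have hs2 : Real.sin (2*θ₀) ≠ 0 :=
    (Real.sin_neg_of_neg_of_neg_pi_lt (by linarith) (by linarith)).ne
  have hcot : ContinuousAt (fun θ : ℝ => Real.cot (2*θ)) θ₀ := by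
    have : (fun θ : ℝ => Real.cot (2*θ)) = fun θ => Real.cos (2*θ) / Real.sin (2*θ) := by
      funext x; exact Real.cot_eq_cos_div_sin (2*x)
    rw [this]
    exact ((Real.continuous_cos.comp (continuous_const.mul continuous_id)).continuousAt).div
      ((Real.continuous_sin.comp (continuous_const.mul continuous_id)).continuousAt) hs2
  have hI0 : ContinuousAt (fun θ : ℝ => ∫ y in θ..0, f0 lam y) θ₀ := by
    set a := (θ₀ + -(Real.pi/2))/2 with ha
    have ha1 : -(Real.pi/2) < a := by rw [ha]; linarith
    have ha2 : a < θ₀ := by rw [ha]; linarith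
    have ha0 : a < 0 := by linarith
    have hInt : IntegrableOn (f0 lam) (uIcc a 0) volume := by
      rw [uIcc_of_le ha0.le]
      exact integrableOn_f0 hlam.le ha1 ha0
    have := intervalIntegral.continuousOn_primitive_interval_left hInt
    apply this.continuousAt
    rw [uIcc_of_le ha0.le]
    exact Icc_mem_nhds ha2 hθ₂
  have hHfun : ContinuousAt (fun θ : ℝ => Hfun lam θ) θ₀ := by
    apply ContinuousAt.mul
    · exact Real.continuous_exp.continuousAt.comp (hcot.const_mul (-2*lam))
    · exact hI0
  have hp0 : ContinuousAt (fun θ : ℝ => p0t lam θ) θ₀ := by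
    apply ContinuousAt.mul
    · apply ContinuousAt.mul continuousAt_const
      exact (continuousAt_const.div ((Real.continuous_sin.continuousAt).pow 2) (pow_ne_zero 2 hS))
    · exact hHfun
  have hp1 : ContinuousAt (fun θ : ℝ => p1t lam θ) θ₀ := by
    apply ContinuousAt.mul
    · exact (continuousAt_const.div ((Real.continuous_cos.continuousAt).pow 2) (pow_ne_zero 2 hC))
    · exact continuousAt_const.sub (continuousAt_const.mul hHfun)
  exact ((hp0.sub hp1).mul Real.continuous_cos.continuousAt).mul Real.continuous_sin.continuousAt

theorem main {lam : ℝ} (hlam : 0 < lam) :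
    IntervalIntegrable (fun θ => (p0t lam θ - p1t lam θ) * Real.cos θ * Real.sin θ)
      MeasureTheory.volume (-(Real.pi / 2)) 0 ∧
    0 < ∫ θ in (-(Real.pi / 2))..0, (p0t lam θ - p1t lam θ) * Real.cos θ * Real.sin θ := by
  have hπ := Real.pi_pos
  set F := fun θ => (p0t lam θ - p1t lam θ) * Real.cos θ * Real.sin θ with hF
  have hab : -(Real.pi/2) < (0:ℝ) := by linarith
  have hIoo : IntegrableOn F (Ioo (-(Real.pi/2)) 0) volume := by
    constructor
    · exact (contOn hlam).aestronglyMeasurable measurableSet_Ioo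
    · apply HasFiniteIntegral.restrict_of_bounded
        (C := 1 + (4 + 8*Real.pi/lam^2) * Real.pi^2 / 4) measure_Ioo_lt_top
      rw [ae_restrict_iff' measurableSet_Ioo]
      refine ae_of_all _ (fun θ hθ => ?_)
      rw [Real.norm_eq_abs, abs_of_pos (pointwise_pos hlam.le hθ.1 hθ.2)]
      exact pointwise_le hlam hθ.1 hθ.2
  have hInt : IntervalIntegrable F volume (-(Real.pi/2)) 0 := by
    rw [intervalIntegrable_iff_integrableOn_Ioc_of_le hab.le]
    exact hIoo.congr_set_ae (Ioo_ae_eq_Ioc).symm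
  refine ⟨hInt, ?_⟩
  exact intervalIntegral.intervalIntegral_pos_of_pos_on hInt
    (fun x hx => pointwise_pos hlam.le hx.1 hx.2) hab

end GPos

/-- The function `θ ↦ (p̃₀(θ;λ) - p̃₁(θ;λ)) cos θ sin θ` is integrable on `(-π/2, 0)` and
its integral is strictly positive. -/
theorem G_integrand_integrable_pos (lam : ℝ) (hlam : 0 < lam) :
    IntervalIntegrable (fun θ => (p0t lam θ - p1t lam θ) * Real.cos θ * Real.sin θ)
      MeasureTheory.volume (-(Real.pi / 2)) 0 ∧
    0 < ∫ θ in (-(Real.pi / 2))..0, (p0t lam θ - p1t lam θ) * Real.cos θ * Real.sin θ :=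
  GPos.main hlam
end
end

section
/- For every λ > 0 and every θ ∈ (−π/2, 0), the functions p̃_0(·;λ) and p̃_1(·;λ) satisfy the stationarity equations: d/dθ[ sin²(θ) · p̃_0(θ;λ) ] = λ (p̃_0(θ;λ) − p̃_1(θ;λ)) and d/dθ[ cos²(θ) · p̃_1(θ;λ) ] = λ (p̃_1(θ;λ) − p̃_0(θ;λ)). -/
open MeasureTheory ProbabilityTheory Matrix Filter Set
open scoped RealInnerProductSpace

noncomputable section

lemma cot_hasDerivAt {x : ℝ} (hx : Real.sin x ≠ 0) :
    HasDerivAt Real.cot (-(1 / Real.sin x ^ 2)) x := by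
  have h : HasDerivAt (fun y => Real.cos y / Real.sin y)
      ((-Real.sin x * Real.sin x - Real.cos x * Real.cos x) / Real.sin x ^ 2) x :=
    (Real.hasDerivAt_cos x).div (Real.hasDerivAt_sin x) hx
  have heq : (-Real.sin x * Real.sin x - Real.cos x * Real.cos x) / Real.sin x ^ 2
      = -(1 / Real.sin x ^ 2) := by
    have h1 := Real.sin_sq_add_cos_sq x
    field_simp
    nlinarith [h1]
  have hfun : (fun y => Real.cos y / Real.sin y) = Real.cot := by
    funext y; rw [Real.cot_eq_cos_div_sin]
  rw [heq, hfun] at h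
  exact h

lemma cot_anti {u v : ℝ} (hu : -Real.pi < u) (huv : u ≤ v) (hv : v < 0) :
    Real.cot v ≤ Real.cot u := by
  have hsu : Real.sin u < 0 :=
    Real.sin_neg_of_neg_of_neg_pi_lt (lt_of_le_of_lt huv hv) hu
  have hsv : Real.sin v < 0 :=
    Real.sin_neg_of_neg_of_neg_pi_lt hv (lt_of_lt_of_le hu huv)
  have hnum : Real.sin (u - v) ≤ 0 :=
    Real.sin_nonpos_of_nonpos_of_neg_pi_le (by linarith) (by linarith)
  have key : Real.cot v - Real.cot u = Real.sin (u - v) / (Real.sin v * Real.sin u) := by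
    rw [Real.cot_eq_cos_div_sin, Real.cot_eq_cos_div_sin, Real.sin_sub]
    field_simp [hsv.ne, hsu.ne]
  have hden : 0 < Real.sin v * Real.sin u := mul_pos_of_neg_of_neg hsv hsu
  have : Real.sin (u - v) / (Real.sin v * Real.sin u) ≤ 0 :=
    div_nonpos_of_nonpos_of_nonneg hnum hden.le
  linarith [key ▸ this]

lemma f_measurable (lam : ℝ) :
    Measurable (fun y : ℝ => Real.exp (2 * lam * Real.cot (2 * y)) / Real.cos y ^ 2) := by
  have hcot : Measurable Real.cot := by
    have : Real.cot = fun x => Real.cos x / Real.sin x :=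
      funext fun x => Real.cot_eq_cos_div_sin x
    rw [this]; exact Real.measurable_cos.div Real.measurable_sin
  exact (Real.measurable_exp.comp
      (measurable_const.mul (hcot.comp (measurable_const.mul measurable_id)))).div
    (Real.measurable_cos.pow_const 2)

lemma f_intervalIntegrable (lam : ℝ) (hlam : 0 < lam) {a : ℝ}
    (ha : a ∈ Set.Ioo (-(Real.pi / 2)) (0 : ℝ)) :
    IntervalIntegrable
      (fun y => Real.exp (2 * lam * Real.cot (2 * y)) / Real.cos y ^ 2) volume a 0 := by
  obtain ⟨ha1, ha2⟩ := ha
  rw [intervalIntegrable_iff_integrableOn_Ioc_of_le ha2.le]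
  have hpi := Real.pi_pos
  have hca : 0 < Real.cos a := Real.cos_pos_of_mem_Ioo ⟨ha1, by linarith⟩
  set M := Real.exp (2 * lam * Real.cot (2 * a)) / Real.cos a ^ 2 with hM
  apply Measure.integrableOn_of_bounded (M := max M 1) measure_Ioc_lt_top.ne
    (f_measurable lam).aestronglyMeasurable
  filter_upwards [ae_restrict_mem measurableSet_Ioc] with y hy
  rcases eq_or_lt_of_le hy.2 with h0 | h0
  · subst h0
    have : Real.cot 0 = 0 := by
      rw [Real.cot_eq_cos_div_sin, Real.sin_zero, div_zero]
    simp [this]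
  · have hy1 : a < y := hy.1
    have hcy : 0 < Real.cos y := Real.cos_pos_of_mem_Ioo ⟨by linarith, by linarith⟩
    have hcot : Real.cot (2 * y) ≤ Real.cot (2 * a) :=
      cot_anti (by linarith) (by linarith) (by linarith)
    have hcos : Real.cos a ≤ Real.cos y := by
      have := Real.cos_le_cos_of_nonneg_of_le_pi (x := -y) (y := -a)
        (by linarith) (by linarith) (by linarith)
      rwa [Real.cos_neg, Real.cos_neg] at this
    have hpos : 0 < Real.exp (2 * lam * Real.cot (2 * y)) / Real.cos y ^ 2 :=
      div_pos (Real.exp_pos _) (by positivity)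
    rw [Real.norm_eq_abs, abs_of_pos hpos]
    refine le_trans ?_ (le_max_left M 1)
    rw [hM]
    apply div_le_div₀ (Real.exp_pos _).le
      (Real.exp_le_exp.mpr (by nlinarith)) (by positivity)
      (by nlinarith)

lemma Hfun_hasDerivAt (lam : ℝ) (hlam : 0 < lam) {θ : ℝ}
    (hθ : θ ∈ Set.Ioo (-(Real.pi / 2)) (0 : ℝ)) :
    HasDerivAt (Hfun lam)
      (4 * lam / Real.sin (2 * θ) ^ 2 * Hfun lam θ - 1 / Real.cos θ ^ 2) θ := by
  obtain ⟨h1, h2⟩ := hθ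
  have hpi := Real.pi_pos
  have hs2 : Real.sin (2 * θ) < 0 :=
    Real.sin_neg_of_neg_of_neg_pi_lt (by linarith) (by linarith)
  have hc : 0 < Real.cos θ := Real.cos_pos_of_mem_Ioo ⟨h1, by linarith⟩
  -- derivative of cot (2 x)
  have h2x : HasDerivAt (fun x : ℝ => 2 * x) 2 θ := by
    simpa using (hasDerivAt_id θ).const_mul 2
  have hcot2 : HasDerivAt (fun x => Real.cot (2 * x)) (-(1 / Real.sin (2 * θ) ^ 2) * 2) θ :=
    (cot_hasDerivAt hs2.ne).comp θ h2x
  -- derivative of E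
  have hE : HasDerivAt (fun x => Real.exp (-2 * lam * Real.cot (2 * x)))
      (Real.exp (-2 * lam * Real.cot (2 * θ)) * (-2 * lam * (-(1 / Real.sin (2 * θ) ^ 2) * 2))) θ :=
    (hcot2.const_mul (-2 * lam)).exp
  -- derivative of F
  have hcont : ContinuousAt (fun y => Real.exp (2 * lam * Real.cot (2 * y)) / Real.cos y ^ 2) θ := by
    apply ContinuousAt.div
    · exact Real.continuous_exp.continuousAt.comp
        ((((cot_hasDerivAt hs2.ne).continuousAt.comp
          ((continuous_const.mul continuous_id).continuousAt))).const_mul (2 * lam))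
    · exact (Real.continuous_cos.continuousAt).pow 2
    · positivity
  have hmeas : StronglyMeasurableAtFilter
      (fun y => Real.exp (2 * lam * Real.cot (2 * y)) / Real.cos y ^ 2) (nhds θ) volume :=
    ⟨Set.univ, Filter.univ_mem, (f_measurable lam).aestronglyMeasurable.restrict⟩
  have hF : HasDerivAt (fun x => ∫ y in x..0, Real.exp (2 * lam * Real.cot (2 * y)) / Real.cos y ^ 2)
      (-(Real.exp (2 * lam * Real.cot (2 * θ)) / Real.cos θ ^ 2)) θ :=
    intervalIntegral.integral_hasDerivAt_left (f_intervalIntegrable lam hlam ⟨h1, h2⟩) hmeas hcont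
  have hmul := hE.mul hF
  have hEq : Real.exp (-2 * lam * Real.cot (2 * θ)) * Real.exp (2 * lam * Real.cot (2 * θ)) = 1 := by
    rw [← Real.exp_add]; ring_nf; exact Real.exp_zero
  unfold Hfun
  convert hmul using 1
  · rfl
  · rfl
  · rfl
  linear_combination hEq / Real.cos θ ^ 2

/-- The stationarity equations: `(sin² θ · p̃₀)' = λ (p̃₀ - p̃₁)` and
`(cos² θ · p̃₁)' = λ (p̃₁ - p̃₀)` on `(-π/2, 0)`. -/
theorem stationarity_equations (lam : ℝ) (hlam : 0 < lam) :
    ∀ θ ∈ Set.Ioo (-(Real.pi / 2)) (0 : ℝ),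
      HasDerivAt (fun x => Real.sin x ^ 2 * p0t lam x)
        (lam * (p0t lam θ - p1t lam θ)) θ ∧
      HasDerivAt (fun x => Real.cos x ^ 2 * p1t lam x)
        (lam * (p1t lam θ - p0t lam θ)) θ := by
  intro θ hθ
  obtain ⟨h1, h2⟩ := hθ
  have hpi := Real.pi_pos
  have hc : 0 < Real.cos θ := Real.cos_pos_of_mem_Ioo ⟨h1, by linarith⟩
  have hs : Real.sin θ < 0 := Real.sin_neg_of_neg_of_neg_pi_lt h2 (by linarith)
  have hD := Hfun_hasDerivAt lam hlam ⟨h1, h2⟩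
  have hident : lam * (p0t lam θ - p1t lam θ)
      = lam * (4 * lam / Real.sin (2 * θ) ^ 2 * Hfun lam θ - 1 / Real.cos θ ^ 2) := by
    simp only [p0t, p1t, Real.sin_two_mul]
    have hsne : Real.sin θ ≠ 0 := hs.ne
    have hcne : Real.cos θ ≠ 0 := hc.ne'
    have hone : (1 : ℝ) - Real.sin θ ^ 2 ≠ 0 := by
      rw [← Real.cos_sq']; positivity
    rw [Real.cos_sq' θ]
    field_simp
    linear_combination (4 * lam * Hfun lam θ) *
      Real.sin_sq_add_cos_sq θ
  have key0 : HasDerivAt (fun x => lam * Hfun lam x) (lam * (p0t lam θ - p1t lam θ)) θ := by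
    rw [hident]; exact hD.const_mul lam
  have hopen : IsOpen {x : ℝ | Real.sin x ≠ 0} := isOpen_ne.preimage Real.continuous_sin
  have hev0 : (fun x => Real.sin x ^ 2 * p0t lam x) =ᶠ[nhds θ] (fun x => lam * Hfun lam x) := by
    filter_upwards [hopen.mem_nhds (show Real.sin θ ≠ 0 from hs.ne)] with x hx
    simp only [p0t]
    field_simp
  refine ⟨key0.congr_of_eventuallyEq hev0, ?_⟩
  have key1 : HasDerivAt (fun x => 1 - lam * Hfun lam x) (lam * (p1t lam θ - p0t lam θ)) θ := by
    have heq : lam * (p1t lam θ - p0t lam θ) = -(lam * (p0t lam θ - p1t lam θ)) := by ring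
    rw [heq, hident]
    exact (hD.const_mul lam).const_sub 1
  have hopen' : IsOpen {x : ℝ | Real.cos x ≠ 0} := isOpen_ne.preimage Real.continuous_cos
  have hev1 : (fun x => Real.cos x ^ 2 * p1t lam x) =ᶠ[nhds θ] (fun x => 1 - lam * Hfun lam x) := by
    filter_upwards [hopen'.mem_nhds (show Real.cos θ ≠ 0 from hc.ne')] with x hx
    simp only [p1t]
    field_simp
  exact key1.congr_of_eventuallyEq hev1
end
end
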